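/- arXiv:2601.08801 — 5 statements merged into one kernel-verified Lean document; each statement's English description precedes it below -/
import Mathlib

section
/- Let u_1,...,u_k be vectors in R^n. Then exactly one of the following holds: (a) there exist positive reals c_1,...,c_k with c_1 u_1 + ... + c_k u_k = 0; or (b) there exists w in R^n with w · u_i ≤ 0 for all i, with strict inequality for at least one i. -/
open Finset

lemma carath_aux {E : Type*} [AddCommGroup E] [Module ℝ E] {m : ℕ} (g : Fin m → E) :
    ∀ N (lam : Fin m → ℝ), (univ.filter (fun j => lam j ≠ 0)).card ≤ N → (∀ j, 0 ≤ lam j) →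
      ∃ mu : Fin m → ℝ, (∀ j, 0 ≤ mu j) ∧ (∑ j, mu j • g j = ∑ j, lam j • g j) ∧
        LinearIndependent ℝ (fun j : {j // mu j ≠ 0} => g j) := by
  intro N
  induction N with
  | zero =>
      intro lam hcard hpos
      have hz : ∀ j, lam j = 0 := by
        intro j
        by_contra hj
        have : j ∈ univ.filter (fun j => lam j ≠ 0) := by simp [hj]
        have := Finset.card_pos.mpr ⟨j, this⟩
        omega
      refine ⟨lam, hpos, rfl, ?_⟩
      haveI : IsEmpty {j // lam j ≠ 0} := ⟨fun j => j.2 (hz j.1)⟩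
      exact linearIndependent_empty_type
  | succ N ih =>
      intro lam hcard hpos
      by_cases hLI : LinearIndependent ℝ (fun j : {j // lam j ≠ 0} => g j)
      · exact ⟨lam, hpos, rfl, hLI⟩
      obtain ⟨f, hfsum, j0, hj0⟩ := Fintype.not_linearIndependent_iff.mp hLI
      -- build the coefficient function on all of Fin m
      set c0 : Fin m → ℝ := fun j => if h : lam j ≠ 0 then f ⟨j, h⟩ else 0 with hc0
      have hc0sum : ∑ j, c0 j • g j = 0 := by
        have h1 : ∑ j ∈ univ.filter (fun j => lam j ≠ 0), c0 j • g j = ∑ j, c0 j • g j := by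
          apply Finset.sum_filter_of_ne
          intro x _ hne
          intro hx
          apply hne
          simp [hc0, hx]
        have h2 : ∑ j ∈ univ.filter (fun j => lam j ≠ 0), c0 j • g j
            = ∑ j : {j // lam j ≠ 0}, c0 j.1 • g j.1 := by
          exact Finset.sum_subtype _ (by simp) _
        rw [← h1, h2]
        rw [← hfsum]
        apply Finset.sum_congr rfl
        intro x _
        simp [hc0, x.2]
      have hc0supp : ∀ j, c0 j ≠ 0 → lam j ≠ 0 := by
        intro j hj
        by_contra h
        apply hj
        simp [hc0, h]
      -- WLOG some coefficient is positive
      obtain ⟨c, hcsum, hcsupp, jw, hjw⟩ :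
          ∃ c : Fin m → ℝ, (∑ j, c j • g j = 0) ∧ (∀ j, c j ≠ 0 → lam j ≠ 0) ∧
            ∃ j, 0 < c j := by
        rcases lt_or_gt_of_ne hj0 with hneg | hpos'
        · refine ⟨-c0, by simp [hc0sum], fun j hj => hc0supp j (by simpa using hj), j0.1, ?_⟩
          have : c0 j0.1 = f j0 := by simp [hc0, j0.2]
          simp [this]
          linarith
        · refine ⟨c0, hc0sum, hc0supp, j0.1, ?_⟩
          have : c0 j0.1 = f j0 := by simp [hc0, j0.2]
          rw [this]; exact hpos'
      set T : Finset (Fin m) := univ.filter (fun j => 0 < c j) with hT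
      have hTne : T.Nonempty := ⟨jw, by simp [hT, hjw]⟩
      set t : ℝ := T.inf' hTne (fun j => lam j / c j) with ht
      obtain ⟨j1, hj1T, hj1⟩ := Finset.exists_mem_eq_inf' hTne (fun j => lam j / c j)
      have hcj1 : 0 < c j1 := by simpa [hT] using hj1T
      have ht0 : 0 ≤ t := by
        apply Finset.le_inf'
        intro b hb
        have : 0 < c b := by simpa [hT] using hb
        exact div_nonneg (hpos b) this.le
      set mu : Fin m → ℝ := fun j => lam j - t * c j with hmu
      have hmupos : ∀ j, 0 ≤ mu j := by
        intro j
        rcases le_or_gt (c j) 0 with h | h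
        · have : t * c j ≤ 0 := mul_nonpos_iff.mpr (Or.inl ⟨ht0, h⟩)
          simp only [hmu]; linarith [hpos j]
        · have hjT : j ∈ T := by simp [hT, h]
          have := Finset.inf'_le (fun j => lam j / c j) hjT
          rw [← ht] at this
          have h2 : t * c j ≤ lam j := by
            have h3 := mul_le_mul_of_nonneg_right this h.le
            rwa [div_mul_cancel₀ _ (ne_of_gt h)] at h3
          simp only [hmu]; linarith
      have hmusum : ∑ j, mu j • g j = ∑ j, lam j • g j := by
        have he : ∀ j : Fin m, mu j • g j = lam j • g j - t • (c j • g j) := by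
          intro j
          simp only [hmu, sub_smul, smul_smul]
        rw [Finset.sum_congr rfl (fun j _ => he j), Finset.sum_sub_distrib,
          ← Finset.smul_sum, hcsum, smul_zero, sub_zero]
      have htj1 : t = lam j1 / c j1 := by rw [ht]; exact hj1
      have hmuj1 : mu j1 = 0 := by
        simp only [hmu, htj1]
        field_simp
        ring
      have hsubset : univ.filter (fun j => mu j ≠ 0) ⊆ (univ.filter (fun j => lam j ≠ 0)).erase j1 := by
        intro j hj
        simp only [Finset.mem_filter, Finset.mem_univ, true_and] at hj
        have hlamj : lam j ≠ 0 := by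
          by_contra h0
          rcases eq_or_ne (c j) 0 with hc | hc
          · apply hj; simp [hmu, h0, hc]
          · exact hcsupp j hc h0
        refine Finset.mem_erase.mpr ⟨?_, by simp [hlamj]⟩
        rintro rfl
        exact hj hmuj1
      have hlamj1 : lam j1 ≠ 0 := hcsupp j1 (ne_of_gt hcj1)
      have hmem : j1 ∈ univ.filter (fun j => lam j ≠ 0) := by simp [hlamj1]
      have hcard' : (univ.filter (fun j => mu j ≠ 0)).card ≤ N := by
        have hc2 := Finset.card_le_card hsubset
        rw [Finset.card_erase_of_mem hmem] at hc2
        omega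
      obtain ⟨mu', h1, h2, h3⟩ := ih mu hcard' hmupos
      exact ⟨mu', h1, h2.trans hmusum, h3⟩

lemma cone_isClosed {E : Type*} [NormedAddCommGroup E] [NormedSpace ℝ E] [FiniteDimensional ℝ E]
    {m : ℕ} (g : Fin m → E) :
    IsClosed {x : E | ∃ lam : Fin m → ℝ, (∀ j, 0 ≤ lam j) ∧ ∑ j, lam j • g j = x} := by
  classical
  have key : {x : E | ∃ lam : Fin m → ℝ, (∀ j, 0 ≤ lam j) ∧ ∑ j, lam j • g j = x}
      = ⋃ s : {s : Finset (Fin m) //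
            LinearIndependent ℝ (fun j : {x // x ∈ s} => g j.1)},
          (Fintype.linearCombination ℝ (fun j : {x // x ∈ s.1} => g j.1)) ''
            {v : {x // x ∈ s.1} → ℝ | ∀ j, 0 ≤ v j} := by
    ext x
    simp only [Set.mem_setOf_eq, Set.mem_iUnion, Set.mem_image]
    constructor
    · rintro ⟨lam, hpos, hsum⟩
      obtain ⟨mu, hmupos, hmusum, hLI⟩ := carath_aux g _ lam le_rfl hpos
      set s : Finset (Fin m) := univ.filter (fun j => mu j ≠ 0) with hs
      have hLI' : LinearIndependent ℝ (fun j : {x // x ∈ s} => g j.1) := by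
        apply hLI.comp
          (fun j : {x // x ∈ s} => (⟨j.1, (Finset.mem_filter.mp j.2).2⟩ : {j // mu j ≠ 0}))
        intro a b hab
        have h2 := congrArg Subtype.val hab
        exact Subtype.ext h2
      refine ⟨⟨s, hLI'⟩, fun j => mu j.1, fun j => hmupos j.1, ?_⟩
      rw [Fintype.linearCombination_apply]
      have h1 : ∑ j : {x // x ∈ s}, mu j.1 • g j.1 = ∑ j ∈ s, mu j • g j :=
        Finset.sum_coe_sort s (fun j => mu j • g j)
      rw [h1]
      rw [Finset.sum_subset (Finset.subset_univ s) (by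
        intro y _ hy
        have : mu y = 0 := by
          by_contra h
          exact hy (by simp [hs, h])
        simp [this])]
      rw [hmusum, hsum]
    · rintro ⟨⟨s, hLI⟩, v, hv, rfl⟩
      refine ⟨fun j => if h : j ∈ s then v ⟨j, h⟩ else 0, ?_, ?_⟩
      · intro j
        by_cases h : j ∈ s
        · simpa [h] using hv ⟨j, h⟩
        · simp [h]
      · rw [Fintype.linearCombination_apply]
        rw [← Finset.sum_subset (Finset.subset_univ s) (by
          intro y _ hy
          simp [hy])]
        rw [← Finset.sum_coe_sort s]
        apply Finset.sum_congr rfl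
        intro j _
        simp [j.2]
  rw [key]
  apply isClosed_iUnion_of_finite
  rintro ⟨s, hLI⟩
  have hker : LinearMap.ker (Fintype.linearCombination ℝ (fun j : {x // x ∈ s} => g j.1)) = ⊥ := by
    rw [LinearMap.ker_eq_bot']
    intro f hf
    rw [Fintype.linearCombination_apply] at hf
    funext j
    exact Fintype.linearIndependent_iff.mp hLI f hf j
  have hemb := LinearMap.isClosedEmbedding_of_injective hker
  apply hemb.isClosedMap
  have hset : {v : {x // x ∈ s} → ℝ | ∀ j, 0 ≤ v j}
      = ⋂ j : {x // x ∈ s}, (fun v : {x // x ∈ s} → ℝ => v j) ⁻¹' Set.Ici 0 := by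
    ext v; simp [Set.mem_iInter]
  rw [hset]
  exact isClosed_iInter (fun j => isClosed_Ici.preimage (continuous_apply j))

open scoped InnerProductSpace

noncomputable def eb (k : ℕ) (j : Fin k) : EuclideanSpace ℝ (Fin k) :=
  EuclideanSpace.single j (1 : ℝ)

lemma eb_apply {k : ℕ} (i j : Fin k) : eb k i j = if j = i then (1:ℝ) else 0 :=
  EuclideanSpace.single_apply i 1 j

lemma eb_sum {k : ℕ} (x : EuclideanSpace ℝ (Fin k)) : ∑ j, x j • eb k j = x := by
  have h := (EuclideanSpace.basisFun (Fin k) ℝ).sum_repr x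
  simpa [eb, EuclideanSpace.basisFun_apply, EuclideanSpace.basisFun_repr] using h

lemma euclid_sum_apply {k : ℕ} {ι : Type*} (s : Finset ι) (f : ι → EuclideanSpace ℝ (Fin k))
    (j : Fin k) : (∑ i ∈ s, f i) j = ∑ i ∈ s, f i j :=
  by rw [WithLp.ofLp_sum, Finset.sum_apply]

def coneK {k : ℕ} (V : Submodule ℝ (EuclideanSpace ℝ (Fin k))) : Set (EuclideanSpace ℝ (Fin k)) :=
  {z | ∃ v ∈ V, ∃ p : EuclideanSpace ℝ (Fin k), (∀ j, 0 ≤ p j) ∧ z = v + p}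

lemma coneK_closed {k : ℕ} (V : Submodule ℝ (EuclideanSpace ℝ (Fin k))) :
    IsClosed (coneK V) := by
  classical
  set P : EuclideanSpace ℝ (Fin k) →L[ℝ] EuclideanSpace ℝ (Fin k) :=
    Vᗮ.subtypeL.comp (Vᗮ.orthogonalProjectionOnto) with hP
  have hkerP : ∀ z, P z = 0 ↔ z ∈ V := by
    intro z
    rw [hP]
    simp only [ContinuousLinearMap.comp_apply, Submodule.subtypeL_apply,
      Submodule.coe_eq_zero]
    rw [Submodule.orthogonalProjectionOnto_eq_zero_iff, Submodule.orthogonal_orthogonal]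
  have hKeq : coneK V = P ⁻¹'
      {x | ∃ lam : Fin k → ℝ, (∀ j, 0 ≤ lam j) ∧ ∑ j, lam j • P (eb k j) = x} := by
    ext z
    simp only [coneK, Set.mem_setOf_eq, Set.mem_preimage]
    constructor
    · rintro ⟨v, hv, p, hp, rfl⟩
      refine ⟨fun j => p j, hp, ?_⟩
      have h1 : ∑ j, p j • P (eb k j) = P (∑ j, p j • eb k j) := by
        rw [map_sum]
        exact Finset.sum_congr rfl (fun j _ => (map_smul P (p j) (eb k j)).symm)
      rw [h1, eb_sum, map_add, (hkerP v).mpr hv, zero_add]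
    · rintro ⟨lam, hlam, hsum⟩
      set p : EuclideanSpace ℝ (Fin k) := ∑ j, lam j • eb k j with hp
      have hplam : p = WithLp.toLp 2 lam := eb_sum (WithLp.toLp 2 lam)
      have hPp : P p = P z := by
        rw [hp, map_sum]
        rw [← hsum]
        exact Finset.sum_congr rfl (fun j _ => map_smul P (lam j) (eb k j))
      have hzV : z - p ∈ V := (hkerP _).mp (by rw [map_sub, hPp, sub_self])
      refine ⟨z - p, hzV, p, ?_, by abel⟩
      intro j
      rw [hplam]
      exact hlam j
  rw [hKeq]
  exact (cone_isClosed (fun j => P (eb k j))).preimage P.continuous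

noncomputable def coneK' {k : ℕ} (V : Submodule ℝ (EuclideanSpace ℝ (Fin k))) :
    ConvexCone ℝ (EuclideanSpace ℝ (Fin k)) where
  carrier := coneK V
  smul_mem' := by
    rintro c hc z ⟨v, hv, p, hp, rfl⟩
    refine ⟨c • v, V.smul_mem c hv, c • p, ?_, by rw [smul_add]⟩
    intro j
    have h1 : (c • p) j = c * p j := rfl
    rw [h1]
    exact mul_nonneg hc.le (hp j)
  add_mem' := by
    rintro z ⟨v, hv, p, hp, rfl⟩ z' ⟨v', hv', p', hp', rfl⟩
    refine ⟨v + v', V.add_mem hv hv', p + p', ?_, by abel⟩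
    intro j
    have h1 : (p + p') j = p j + p' j := rfl
    rw [h1]
    exact add_nonneg (hp j) (hp' j)

lemma tucker_coord {k : ℕ} (V : Submodule ℝ (EuclideanSpace ℝ (Fin k))) (i : Fin k) :
    (∃ x, x ∈ V ∧ (∀ j, 0 ≤ x j) ∧ 0 < x i) ∨
    (∃ y, y ∈ Vᗮ ∧ (∀ j, 0 ≤ y j) ∧ 0 < y i) := by
  classical
  by_cases hmem : (-(eb k i)) ∈ coneK V
  · obtain ⟨v, hv, p, hp, heq⟩ := hmem
    left
    have hptw : ∀ j, (-v : EuclideanSpace ℝ (Fin k)) j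
        = p j + (if j = i then (1:ℝ) else 0) := by
      intro j
      have h3 : -(eb k i j) = v j + p j := congrArg (fun x : EuclideanSpace ℝ (Fin k) => x j) heq
      have h4 : (-v : EuclideanSpace ℝ (Fin k)) j = -(v j) := rfl
      rw [h4]
      rw [eb_apply] at h3
      linarith
    refine ⟨-v, V.neg_mem hv, ?_, ?_⟩
    · intro j
      rw [hptw j]
      have := hp j
      split <;> linarith
    · rw [hptw i]
      have := hp i
      simp only [if_pos rfl, eq_self_iff_true, if_true]
      linarith
  · right
    have hne : (coneK' V : Set (EuclideanSpace ℝ (Fin k))).Nonempty :=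
      ⟨0, 0, V.zero_mem, 0, fun j => le_rfl, by simp⟩
    obtain ⟨y, hy1, hy2⟩ :=
      ProperCone.hyperplane_separation' (x₀ := -(eb k i))
        ({ toSubmodule := (coneK' V).toPointedCone ⟨0, V.zero_mem, 0, fun j => le_rfl, by simp⟩,
           isClosed' := coneK_closed V } : ProperCone ℝ (EuclideanSpace ℝ (Fin k))) hmem
    have hyi : 0 < y i := by
      rw [inner_neg_left, real_inner_comm] at hy2
      have : ⟪y, eb k i⟫_ℝ = y i := by
        simp [eb, EuclideanSpace.inner_single_right]
      linarith
    have hynn : ∀ j, 0 ≤ y j := by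
      intro j
      have hm : eb k j ∈ coneK' V := ⟨0, V.zero_mem, eb k j, ?_, (zero_add _).symm⟩
      · have := hy1 _ hm
        rwa [eb, EuclideanSpace.inner_single_left, map_one, one_mul] at this
      · intro l
        rw [eb_apply]
        split <;> norm_num
    have hyV : y ∈ Vᗮ := by
      rw [Submodule.mem_orthogonal]
      intro u hu
      have h1 := hy1 u ⟨u, hu, 0, fun j => le_rfl, (add_zero u).symm⟩
      have h2 := hy1 (-u) ⟨-u, V.neg_mem hu, 0, fun j => le_rfl, (add_zero _).symm⟩
      rw [inner_neg_left] at h2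
      linarith
    exact ⟨y, hyV, hynn, hyi⟩

lemma stiemke_subspace {k : ℕ} (V : Submodule ℝ (EuclideanSpace ℝ (Fin k)))
    (hV : ¬ ∃ x, x ∈ V ∧ ∀ i, 0 < x i) :
    ∃ y, y ∈ Vᗮ ∧ (∀ i, 0 ≤ y i) ∧ y ≠ 0 := by
  by_cases hy : ∃ i, ∃ y, y ∈ Vᗮ ∧ (∀ j, 0 ≤ y j) ∧ 0 < y i
  · obtain ⟨i, y, h1, h2, h3⟩ := hy
    refine ⟨y, h1, h2, ?_⟩
    intro h0
    rw [h0] at h3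
    exact lt_irrefl 0 h3
  · exfalso
    apply hV
    have hx : ∀ i, ∃ x, x ∈ V ∧ (∀ j, 0 ≤ x j) ∧ 0 < x i := by
      intro i
      rcases tucker_coord V i with h | h
      · exact h
      · exact absurd ⟨i, h⟩ hy
    choose x hxV hxnn hxi using hx
    refine ⟨∑ i, x i, Submodule.sum_mem V (fun i _ => hxV i), ?_⟩
    intro i
    rw [euclid_sum_apply]
    have h1 : ∀ j ∈ Finset.univ, (0:ℝ) ≤ x j i := fun j _ => hxnn j i
    calc (0:ℝ) < x i i := hxi i
      _ ≤ ∑ j, x j i := Finset.single_le_sum h1 (Finset.mem_univ i)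

/-- **Stiemke's theorem of the alternative.**
Given vectors `u 1, ..., u k` in `ℝ^n`, exactly one of the following holds:
(a) there exist positive reals `c i` with `∑ i, c i • u i = 0`; or
(b) there exists `w ∈ ℝ^n` with `w · u i ≤ 0` for all `i`, with strict
inequality for at least one `i`. -/
theorem stiemke (n k : ℕ) (u : Fin k → (Fin n → ℝ)) :
    Xor'
      (∃ c : Fin k → ℝ, (∀ i, 0 < c i) ∧ ∑ i, c i • u i = 0)
      (∃ w : Fin n → ℝ, (∀ i, ∑ j, w j * u i j ≤ 0) ∧ ∃ i, ∑ j, w j * u i j < 0) := by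
  classical
  have hswap : ∀ (c : Fin k → ℝ) (w : Fin n → ℝ),
      ∑ i, c i * (∑ j, w j * u i j) = ∑ j, w j * (∑ i, c i * u i j) := by
    intro c w
    have h1 : ∀ i, c i * (∑ j, w j * u i j) = ∑ j, w j * (c i * u i j) := by
      intro i
      rw [Finset.mul_sum]
      exact Finset.sum_congr rfl (fun j _ => by ring)
    rw [Finset.sum_congr rfl (fun i _ => h1 i), Finset.sum_comm]
    exact Finset.sum_congr rfl (fun j _ => (Finset.mul_sum _ _ _).symm)
  have happly : ∀ (c : Fin k → ℝ) (j : Fin n), (∑ i, c i • u i) j = ∑ i, c i * u i j := by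
    intro c j
    rw [Finset.sum_apply]
    exact Finset.sum_congr rfl (fun i _ => rfl)
  -- the two alternatives are mutually exclusive
  have hAB : ¬ ((∃ c : Fin k → ℝ, (∀ i, 0 < c i) ∧ ∑ i, c i • u i = 0) ∧
      (∃ w : Fin n → ℝ, (∀ i, ∑ j, w j * u i j ≤ 0) ∧ ∃ i, ∑ j, w j * u i j < 0)) := by
    rintro ⟨⟨c, hc, hsum⟩, ⟨w, hw1, i0, hw2⟩⟩
    have key : ∑ i, c i * (∑ j, w j * u i j) = 0 := by
      rw [hswap]
      have h2 : ∀ j, (∑ i, c i * u i j) = 0 := by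
        intro j
        rw [← happly, hsum]
        rfl
      simp [h2]
    have hlt : ∑ i, c i * (∑ j, w j * u i j) < 0 := by
      have h3 : ∑ i, c i * (∑ j, w j * u i j) < ∑ _i : Fin k, (0:ℝ) :=
        Finset.sum_lt_sum
          (fun i _ => mul_nonpos_of_nonneg_of_nonpos (hc i).le (hw1 i))
          ⟨i0, Finset.mem_univ i0, mul_neg_of_pos_of_neg (hc i0) hw2⟩
      simpa using h3
    exact absurd key (ne_of_lt hlt)
  -- the submodule of coefficient vectors summing to zero
  set V : Submodule ℝ (EuclideanSpace ℝ (Fin k)) :=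
    { carrier := {c : EuclideanSpace ℝ (Fin k) | ∑ i, c i • u i = 0}
      add_mem' := by
        intro a b ha hb
        simp only [Set.mem_setOf_eq] at *
        have h1 : ∀ i, ((a + b : EuclideanSpace ℝ (Fin k)) i) • u i
            = a i • u i + b i • u i := by
          intro i
          have : (a + b : EuclideanSpace ℝ (Fin k)) i = a i + b i := rfl
          rw [this, add_smul]
        rw [Finset.sum_congr rfl (fun i _ => h1 i), Finset.sum_add_distrib, ha, hb, add_zero]
      zero_mem' := by
        simp only [Set.mem_setOf_eq]
        have h1 : ∀ i, ((0 : EuclideanSpace ℝ (Fin k)) i) • u i = 0 := by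
          intro i
          have : (0 : EuclideanSpace ℝ (Fin k)) i = 0 := rfl
          rw [this, zero_smul]
        rw [Finset.sum_congr rfl (fun i _ => h1 i), Finset.sum_const, smul_zero]
      smul_mem' := by
        intro t a ha
        simp only [Set.mem_setOf_eq] at *
        have h1 : ∀ i, ((t • a : EuclideanSpace ℝ (Fin k)) i) • u i
            = t • (a i • u i) := by
          intro i
          have : (t • a : EuclideanSpace ℝ (Fin k)) i = t * a i := rfl
          rw [this, mul_smul]
        rw [Finset.sum_congr rfl (fun i _ => h1 i), ← Finset.smul_sum, ha, smul_zero] }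
    with hVdef
  set B : (Fin n → ℝ) →ₗ[ℝ] EuclideanSpace ℝ (Fin k) :=
    { toFun := fun w => WithLp.toLp 2 (fun i => ∑ j, w j * u i j : Fin k → ℝ)
      map_add' := by
        intro a b
        ext i
        simp [add_mul, Finset.sum_add_distrib]
      map_smul' := by
        intro t a
        ext i
        simp [Finset.mul_sum, mul_assoc] }
    with hBdef
  have horth : Vᗮ = LinearMap.range B := by
    have h1 : (LinearMap.range B)ᗮ = V := by
      ext c
      rw [Submodule.mem_orthogonal]
      constructor
      · intro h
        have h2 : ∀ w : Fin n → ℝ, ⟪B w, c⟫_ℝ = 0 := fun w => h (B w) (LinearMap.mem_range_self B w)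
        have h3 : ∀ w : Fin n → ℝ, ∑ j, w j * (∑ i, c i * u i j) = 0 := by
          intro w
          have h4 : ⟪B w, c⟫_ℝ = ∑ i, (B w) i * c i := by
            simp [PiLp.inner_apply, RCLike.inner_apply, conj_trivial]
            exact Finset.sum_congr rfl (fun i _ => mul_comm _ _)
          have h5 : ∑ i, (B w) i * c i = ∑ i, c i * (∑ j, w j * u i j) := by
            apply Finset.sum_congr rfl
            intro i _
            have : (B w) i = ∑ j, w j * u i j := rfl
            rw [this, mul_comm]
          rw [← hswap c w, ← h5, ← h4]
          exact h2 w
        show (∑ i, c i • u i) = 0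
        funext j
        have h6 := h3 (Pi.single j 1)
        rw [happly]
        have h7 : ∑ j', (Pi.single j (1:ℝ) : Fin n → ℝ) j' * (∑ i, c i * u i j')
            = ∑ i, c i * u i j := by
          rw [Finset.sum_eq_single j]
          · simp
          · intro b _ hb
            simp [Pi.single_apply, hb]
          · intro hj
            exact absurd (Finset.mem_univ j) hj
        rw [← h7, h6]
        rfl
      · intro hc z hz
        obtain ⟨w, rfl⟩ := hz
        have h4 : ⟪B w, c⟫_ℝ = ∑ i, c i * (∑ j, w j * u i j) := by
          simp only [PiLp.inner_apply, RCLike.inner_apply, conj_trivial]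
          apply Finset.sum_congr rfl
          intro i _
          have : (B w) i = ∑ j, w j * u i j := rfl
          rw [this, mul_comm]
        rw [h4, hswap]
        have h5 : ∀ j, (∑ i, c i * u i j) = 0 := by
          intro j
          rw [← happly]
          have : (∑ i, c i • u i) = 0 := hc
          rw [this]
          rfl
        simp [h5]
    rw [← h1, Submodule.orthogonal_orthogonal]
  rcases Classical.em (∃ c : Fin k → ℝ, (∀ i, 0 < c i) ∧ ∑ i, c i • u i = 0) with hA | hA
  · exact Or.inl ⟨hA, fun hB => hAB ⟨hA, hB⟩⟩
  · refine Or.inr ⟨?_, hA⟩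
    have hV : ¬ ∃ x, x ∈ V ∧ ∀ i, 0 < x i := by
      rintro ⟨x, hxV, hxpos⟩
      exact hA ⟨x, hxpos, hxV⟩
    obtain ⟨y, hyV, hynn, hyne⟩ := stiemke_subspace V hV
    rw [horth] at hyV
    obtain ⟨w, hw⟩ := hyV
    have hBw : ∀ i, ∑ j, w j * u i j = y i := fun i => congrArg (fun x : EuclideanSpace ℝ (Fin k) => x i) hw
    refine ⟨-w, ?_, ?_⟩
    · intro i
      have h1 : ∑ j, (-w) j * u i j = -(∑ j, w j * u i j) := by
        rw [← Finset.sum_neg_distrib]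
        exact Finset.sum_congr rfl (fun j _ => by simp [neg_mul])
      rw [h1, hBw]
      linarith [hynn i]
    · obtain ⟨i0, hi0⟩ : ∃ i, y i ≠ 0 := by
        by_contra h
        push_neg at h
        exact hyne (PiLp.ext h)
      refine ⟨i0, ?_⟩
      have h1 : ∑ j, (-w) j * u i0 j = -(∑ j, w j * u i0 j) := by
        rw [← Finset.sum_neg_distrib]
        exact Finset.sum_congr rfl (fun j _ => by simp [neg_mul])
      rw [h1, hBw]
      have : 0 < y i0 := lt_of_le_of_ne (hynn i0) (Ne.symm hi0)
      linarith
end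

section
/- A reaction network G = (V,E) is not consistent if and only if there exists a vector w in R^n such that w · (y' - y) ≤ 0 for every edge (y, y') in E, with strict inequality for at least one edge. -/
open Matrix Finset

/-- membership in the cone generated by a list of vectors, recursively. -/
def InCone {n : ℕ} : List (Fin n → ℝ) → (Fin n → ℝ) → Prop
  | [], b => b = 0
  | a :: L, b => ∃ t : ℝ, 0 ≤ t ∧ InCone L (b - t • a)

lemma dot_sum {n : ℕ} {α : Type*} (w : Fin n → ℝ) (s : Finset α) (f : α → Fin n → ℝ) :
    w ⬝ᵥ (∑ e ∈ s, f e) = ∑ e ∈ s, w ⬝ᵥ f e := by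
  simp only [dotProduct, Finset.sum_apply, Finset.mul_sum]
  exact Finset.sum_comm

lemma incone_shift {n : ℕ} (w a : Fin n → ℝ) (c : ℝ) (hc : 0 < c) :
    ∀ (L : List (Fin n → ℝ)) (y : Fin n → ℝ), (∀ x ∈ L, w ⬝ᵥ x ≤ 0) →
      InCone (L.map (fun x => x - (w ⬝ᵥ x / c) • a)) y →
      ∃ s : ℝ, s ≤ 0 ∧ InCone L (y + s • a) := by
  intro L
  induction L with
  | nil =>
      intro y _ hy
      refine ⟨0, le_rfl, ?_⟩
      simp only [List.map_nil, InCone] at hy ⊢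
      simp [hy]
  | cons x L ih =>
      intro y hL hy
      obtain ⟨t, ht, hrest⟩ := hy
      obtain ⟨s, hs, hin⟩ := ih (y - t • (x - (w ⬝ᵥ x / c) • a))
        (fun z hz => hL z (List.mem_cons_of_mem _ hz)) hrest
      refine ⟨s + t * (w ⬝ᵥ x) / c, ?_, ?_⟩
      · have hwx : w ⬝ᵥ x ≤ 0 := hL x List.mem_cons_self
        have : t * (w ⬝ᵥ x) / c ≤ 0 :=
          div_nonpos_of_nonpos_of_nonneg (mul_nonpos_of_nonneg_of_nonpos ht hwx) hc.le
        linarith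
      · refine ⟨t, ht, ?_⟩
        have : (y + (s + t * (w ⬝ᵥ x) / c) • a) - t • x
            = (y - t • (x - (w ⬝ᵥ x / c) • a)) + s • a := by
          have h1 : t * (w ⬝ᵥ x) / c = t * (w ⬝ᵥ x / c) := by ring
          rw [h1]
          module
        rw [this]
        exact hin

lemma farkas_aux {n : ℕ} : ∀ (k : ℕ) (L : List (Fin n → ℝ)), L.length ≤ k →
    ∀ b : Fin n → ℝ, InCone L b ∨ ∃ w : Fin n → ℝ, (∀ x ∈ L, w ⬝ᵥ x ≤ 0) ∧ 0 < w ⬝ᵥ b := by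
  intro k
  induction k with
  | zero =>
      intro L hL b
      rw [Nat.le_zero, List.length_eq_zero_iff] at hL
      subst hL
      by_cases hb : b = 0
      · exact Or.inl hb
      · refine Or.inr ⟨b, by simp, ?_⟩
        have h1 : 0 ≤ b ⬝ᵥ b := Finset.sum_nonneg fun j _ => mul_self_nonneg _
        exact lt_of_le_of_ne h1 (Ne.symm (fun h => hb (dotProduct_self_eq_zero.mp h)))
  | succ k ih =>
      intro L hL b
      match L with
      | [] => exact ih [] (by simp) b
      | a :: L' =>
        have hL' : L'.length ≤ k := by simpa using hL
        rcases ih L' hL' b with h | ⟨w, hw, hwb⟩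
        · exact Or.inl ⟨0, le_rfl, by simpa using h⟩
        · by_cases ha : w ⬝ᵥ a ≤ 0
          · refine Or.inr ⟨w, ?_, hwb⟩
            intro x hx
            rcases List.mem_cons.mp hx with rfl | hx
            · exact ha
            · exact hw x hx
          · push_neg at ha
            set c := w ⬝ᵥ a with hc
            set f : (Fin n → ℝ) → (Fin n → ℝ) := fun x => x - (w ⬝ᵥ x / c) • a with hf
            rcases ih (L'.map f) (by simpa using hL') (f b) with h | ⟨u, hu, hub⟩
            · obtain ⟨s, hs, hin⟩ := incone_shift w a c ha L' (f b) hw h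
              refine Or.inl ⟨w ⬝ᵥ b / c - s, ?_, ?_⟩
              · have : 0 < w ⬝ᵥ b / c := div_pos hwb ha
                linarith
              · have : b - (w ⬝ᵥ b / c - s) • a = f b + s • a := by
                  simp only [hf]
                  module
                rw [this]
                exact hin
            · refine Or.inr ⟨u - ((u ⬝ᵥ a) / c) • w, ?_, ?_⟩
              · intro x hx
                have hdx : ∀ z : Fin n → ℝ, (u - ((u ⬝ᵥ a) / c) • w) ⬝ᵥ z
                    = u ⬝ᵥ z - ((u ⬝ᵥ a) / c) * (w ⬝ᵥ z) := by
                  intro z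
                  simp [sub_dotProduct, smul_dotProduct, smul_eq_mul]
                rcases List.mem_cons.mp hx with rfl | hx
                · rw [hdx]
                  have hc0 : c ≠ 0 := ne_of_gt ha
                  field_simp
                  rw [← hc]; simp
                · rw [hdx]
                  have := hu (f x) (List.mem_map_of_mem (f := f) hx)
                  simp only [hf, dotProduct_sub, dotProduct_smul, smul_eq_mul] at this
                  have heq : (u ⬝ᵥ a) / c * (w ⬝ᵥ x) = (w ⬝ᵥ x) / c * (u ⬝ᵥ a) := by ring
                  linarith [this, heq.le, heq.ge]
              · have hdx : (u - ((u ⬝ᵥ a) / c) • w) ⬝ᵥ b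
                    = u ⬝ᵥ b - ((u ⬝ᵥ a) / c) * (w ⬝ᵥ b) := by
                  simp [sub_dotProduct, smul_dotProduct, smul_eq_mul]
                rw [hdx]
                simp only [hf, dotProduct_sub, dotProduct_smul, smul_eq_mul] at hub
                have heq : (u ⬝ᵥ a) / c * (w ⬝ᵥ b) = (w ⬝ᵥ b) / c * (u ⬝ᵥ a) := by ring
                linarith [hub, heq.le, heq.ge]

lemma incone_coeff {n : ℕ} {α : Type*} [DecidableEq α] (v : α → Fin n → ℝ) :
    ∀ (l : List α), l.Nodup → ∀ b : Fin n → ℝ, InCone (l.map v) b →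
      ∃ μ : α → ℝ, (∀ a, 0 ≤ μ a) ∧ (l.map (fun a => μ a • v a)).sum = b := by
  intro l
  induction l with
  | nil =>
      intro _ b hb
      exact ⟨fun _ => 0, fun _ => le_rfl, by simpa using hb.symm⟩
  | cons a l ih =>
      intro hnd b hb
      obtain ⟨t, ht, hrest⟩ := hb
      obtain ⟨μ, hμ, hsum⟩ := ih hnd.of_cons _ hrest
      refine ⟨fun x => if x = a then t else μ x, ?_, ?_⟩
      · intro x
        by_cases hx : x = a <;> simp [hx, ht, hμ x]
      · have hmap : l.map (fun x => (if x = a then t else μ x) • v x)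
            = l.map (fun x => μ x • v x) := by
          apply List.map_congr_left
          intro x hx
          have : x ≠ a := fun h => (List.nodup_cons.mp hnd).1 (h ▸ hx)
          simp [this]
        simp only [List.map_cons, List.sum_cons, hmap, hsum]
        rw [if_true]
        module

/-- A reaction network `G = (V, E)` (edges `E` between vertices in `ℝ^n`, no
self-loops) is *not consistent* — i.e. there is no choice of positive scalars
`λ_{y→y'}` with `∑_{y→y'∈E} λ_{y→y'} (y' - y) = 0` — if and only if there
exists a vector `w ∈ ℝ^n` with `w · (y' - y) ≤ 0` for every edge `(y, y') ∈ E`,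
with strict inequality for at least one edge. -/
theorem not_consistent_iff_exists_w (n : ℕ)
    (E : Finset ((Fin n → ℝ) × (Fin n → ℝ)))
    (hNoLoop : ∀ e ∈ E, e.1 ≠ e.2) :
    (¬ ∃ lam : (Fin n → ℝ) × (Fin n → ℝ) → ℝ,
        (∀ e ∈ E, 0 < lam e) ∧ ∑ e ∈ E, lam e • (e.2 - e.1) = 0)
    ↔
    (∃ w : Fin n → ℝ,
        (∀ e ∈ E, ∑ j, w j * (e.2 j - e.1 j) ≤ 0) ∧
        ∃ e ∈ E, ∑ j, w j * (e.2 j - e.1 j) < 0) := by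
  classical
  have hdot : ∀ (w : Fin n → ℝ) (e : (Fin n → ℝ) × (Fin n → ℝ)),
      (∑ j, w j * (e.2 j - e.1 j)) = w ⬝ᵥ (e.2 - e.1) := by
    intro w e
    simp [dotProduct, Pi.sub_apply]
  constructor
  · -- hard direction
    intro h
    by_cases hall : ∀ e0 ∈ E, ∃ μ : (Fin n → ℝ) × (Fin n → ℝ) → ℝ,
        (∀ e ∈ E, 0 ≤ μ e) ∧ ∑ e ∈ E, μ e • (e.2 - e.1) = -(e0.2 - e0.1)
    · exfalso
      apply h
      choose μ hμ1 hμ2 using hall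
      refine ⟨fun e => 1 + ∑ e0 ∈ E.attach, μ e0.1 e0.2 e, fun e he => ?_, ?_⟩
      · have hnn : 0 ≤ ∑ e0 ∈ E.attach, μ e0.1 e0.2 e :=
          Finset.sum_nonneg fun e0 _ => hμ1 e0.1 e0.2 e he
        have : (0:ℝ) < 1 + ∑ e0 ∈ E.attach, μ e0.1 e0.2 e := by linarith
        exact this
      · show ∑ e ∈ E, (1 + ∑ e0 ∈ E.attach, μ e0.1 e0.2 e) • (e.2 - e.1) = 0
        have expand : ∀ e ∈ E, (1 + ∑ e0 ∈ E.attach, μ e0.1 e0.2 e) • (e.2 - e.1)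
            = (e.2 - e.1) + ∑ e0 ∈ E.attach, μ e0.1 e0.2 e • (e.2 - e.1) := by
          intro e _
          rw [add_smul, one_smul, Finset.sum_smul]
        calc ∑ e ∈ E, (1 + ∑ e0 ∈ E.attach, μ e0.1 e0.2 e) • (e.2 - e.1)
            = ∑ e ∈ E, ((e.2 - e.1) + ∑ e0 ∈ E.attach, μ e0.1 e0.2 e • (e.2 - e.1)) :=
              Finset.sum_congr rfl expand
          _ = ∑ e ∈ E, (e.2 - e.1)
              + ∑ e ∈ E, ∑ e0 ∈ E.attach, μ e0.1 e0.2 e • (e.2 - e.1) :=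
              Finset.sum_add_distrib
          _ = ∑ e ∈ E, (e.2 - e.1)
              + ∑ e0 ∈ E.attach, ∑ e ∈ E, μ e0.1 e0.2 e • (e.2 - e.1) := by
              rw [Finset.sum_comm]
          _ = ∑ e ∈ E, (e.2 - e.1) + ∑ e0 ∈ E.attach, -(e0.1.2 - e0.1.1) := by
              congr 1
              exact Finset.sum_congr rfl fun e0 _ => hμ2 e0.1 e0.2
          _ = 0 := by
              rw [Finset.sum_neg_distrib,
                Finset.sum_attach E (fun e => (e.2 - e.1 : Fin n → ℝ))]
              abel
    · push_neg at hall
      obtain ⟨e0, he0, hne⟩ := hall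
      have hnotin : ¬ InCone (E.toList.map (fun e => e.2 - e.1)) (-(e0.2 - e0.1)) := by
        intro hin
        obtain ⟨μ, hμ1, hμ2⟩ := incone_coeff (fun e => e.2 - e.1) E.toList E.nodup_toList _ hin
        refine hne μ (fun e _ => hμ1 e) ?_
        rw [← Finset.sum_map_toList]
        exact hμ2
      rcases farkas_aux (E.toList.map (fun e => e.2 - e.1)).length
          (E.toList.map (fun e => e.2 - e.1)) le_rfl (-(e0.2 - e0.1)) with h1 | ⟨w, hw, hwb⟩
      · exact absurd h1 hnotin
      · refine ⟨w, fun e he => ?_, ⟨e0, he0, ?_⟩⟩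
        · rw [hdot]
          exact hw (e.2 - e.1)
            (List.mem_map_of_mem (f := fun e => e.2 - e.1) (Finset.mem_toList.mpr he))
        · rw [hdot]
          rw [dotProduct_neg] at hwb
          linarith
  · -- easy direction
    rintro ⟨w, hw, e0, he0, hlt⟩ ⟨lam, hpos, hsum⟩
    have h0 : w ⬝ᵥ (∑ e ∈ E, lam e • (e.2 - e.1)) = 0 := by rw [hsum]; simp
    rw [dot_sum] at h0
    have hterm : ∀ e ∈ E, w ⬝ᵥ (lam e • (e.2 - e.1)) = lam e * (w ⬝ᵥ (e.2 - e.1)) := by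
      intro e _
      simp [dotProduct_smul, smul_eq_mul]
    have hlt' : ∑ e ∈ E, w ⬝ᵥ (lam e • (e.2 - e.1)) < 0 := by
      have : ∑ e ∈ E, w ⬝ᵥ (lam e • (e.2 - e.1)) < ∑ e ∈ E, (0:ℝ) := by
        apply Finset.sum_lt_sum
        · intro e he
          rw [hterm e he]
          exact mul_nonpos_of_nonneg_of_nonpos (hpos e he).le (by rw [← hdot]; exact hw e he)
        · refine ⟨e0, he0, ?_⟩
          rw [hterm e0 he0]
          exact mul_neg_of_pos_of_neg (hpos e0 he0) (by rw [← hdot]; exact hlt)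
      simpa using this
    exact absurd h0 (ne_of_lt hlt')
end

section
/- For a reaction network G, the following are equivalent: (1) G is not consistent; (2) there exists w in R^n with w · (y'-y) ≤ 0 for all edges, strict for at least one; (3) for all positive rate constants k there exists a linear function V(x) = w·x whose derivative along the mass-action vector field is strictly negative on the positive orthant; (4) for all positive rate constants k the mass-action system admits no positive equilibrium. -/
open Real

/-- The mass-action vector field of a reaction network `E` with rate constants
`k`: `f_k(x) = ∑_{y→y'∈E} k_{y→y'} x^y (y' - y)` where `x^y = ∏ i, x i ^ y i`. -/
noncomputable def massActionField (n : ℕ)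
    (E : Finset ((Fin n → ℝ) × (Fin n → ℝ)))
    (k : (Fin n → ℝ) × (Fin n → ℝ) → ℝ) (x : Fin n → ℝ) : Fin n → ℝ :=
  ∑ e ∈ E, (k e * ∏ i, x i ^ e.1 i) • (e.2 - e.1)

namespace NotConsistentAux

open Filter

variable {n : ℕ}

/-- The dot product on `Fin n → ℝ`. -/
noncomputable def dotp (w v : Fin n → ℝ) : ℝ := ∑ j, w j * v j

lemma dotp_add_left (w w' v : Fin n → ℝ) : dotp (w + w') v = dotp w v + dotp w' v := by
  simp [dotp, add_mul, Finset.sum_add_distrib]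

lemma dotp_smul_left (c : ℝ) (w v : Fin n → ℝ) : dotp (c • w) v = c * dotp w v := by
  simp [dotp, Finset.mul_sum, mul_assoc]

lemma dotp_add_right (w v v' : Fin n → ℝ) : dotp w (v + v') = dotp w v + dotp w v' := by
  simp [dotp, mul_add, Finset.sum_add_distrib]

lemma dotp_smul_right (c : ℝ) (w v : Fin n → ℝ) : dotp w (c • v) = c * dotp w v := by
  simp [dotp, Finset.mul_sum, mul_left_comm]

lemma dotp_zero_right (w : Fin n → ℝ) : dotp w 0 = 0 := by simp [dotp]

lemma dotp_sum_right {ι : Type*} (s : Finset ι) (c : ι → ℝ) (v : ι → Fin n → ℝ)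
    (w : Fin n → ℝ) :
    dotp w (∑ e ∈ s, c e • v e) = ∑ e ∈ s, c e * dotp w (v e) := by
  unfold dotp
  simp only [Finset.sum_apply, Pi.smul_apply, smul_eq_mul, Finset.mul_sum]
  rw [Finset.sum_comm]
  exact Finset.sum_congr rfl fun e _ => Finset.sum_congr rfl fun j _ => by ring

lemma continuous_dotp_left (v : Fin n → ℝ) : Continuous fun w : Fin n → ℝ => dotp w v := by
  unfold dotp
  exact continuous_finset_sum _ fun j _ => (continuous_apply j).mul continuous_const

lemma dotp_self_eq_zero {w : Fin n → ℝ} (h : dotp w w = 0) : w = 0 := by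
  funext j
  have h0 : ∀ i ∈ Finset.univ, (0:ℝ) ≤ w i * w i := fun i _ => mul_self_nonneg _
  have := (Finset.sum_eq_zero_iff_of_nonneg h0).mp h j (Finset.mem_univ j)
  simpa [mul_self_eq_zero] using this

lemma continuous_sup' {ι : Type*} {X : Type*} [TopologicalSpace X] {s : Finset ι}
    (hs : s.Nonempty) (f : ι → X → ℝ) (hf : ∀ i, Continuous (f i)) :
    Continuous fun x => s.sup' hs fun i => f i x := by
  induction hs using Finset.Nonempty.cons_induction with
  | singleton a =>
    have h : (fun x => Finset.sup' {a} (Finset.singleton_nonempty a) fun i => f i x) = f a := by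
      funext x; exact Finset.sup'_singleton _
    rw [h]; exact hf a
  | cons a s ha hs ih =>
    simp_rw [Finset.sup'_cons hs]
    exact (hf a).max ih

set_option maxHeartbeats 1000000 in
/-- Stiemke's lemma, in the form needed here. -/
lemma stiemke (n : ℕ) (E : Finset ((Fin n → ℝ) × (Fin n → ℝ)))
    (hNoLoop : ∀ e ∈ E, e.1 ≠ e.2)
    (h2 : ∀ w : Fin n → ℝ, (∀ e ∈ E, dotp w (e.2 - e.1) ≤ 0) →
      ∀ e ∈ E, dotp w (e.2 - e.1) = 0) :
    ∃ lam : (Fin n → ℝ) × (Fin n → ℝ) → ℝ,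
      (∀ e ∈ E, 0 < lam e) ∧ ∑ e ∈ E, lam e • (e.2 - e.1) = 0 := by
  rcases E.eq_empty_or_nonempty with rfl | hE
  · exact ⟨fun _ => 1, by simp⟩
  set v : ((Fin n → ℝ) × (Fin n → ℝ)) → (Fin n → ℝ) := fun e => e.2 - e.1 with hvdef
  set U : Submodule ℝ (Fin n → ℝ) := Submodule.span ℝ (v '' ↑E) with hUdef
  haveI : Nonempty U := ⟨0⟩
  -- orthogonality to all edge vectors implies orthogonality to all of U
  have key_orth : ∀ w : Fin n → ℝ, (∀ e ∈ E, dotp w (v e) = 0) → ∀ x ∈ U, dotp w x = 0 := by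
    intro w hw x hx
    refine Submodule.span_induction (fun y hy => ?_) (dotp_zero_right w)
      (fun y z _ _ hy hz => by rw [dotp_add_right, hy, hz, add_zero])
      (fun c y _ hy => by rw [dotp_smul_right, hy, mul_zero]) hx
    rcases hy with ⟨e, he, rfl⟩
    exact hw e (Finset.mem_coe.mp he)
  -- a unit vector in U
  obtain ⟨e0, he0⟩ := hE
  have hv0 : v e0 ≠ 0 := sub_ne_zero.mpr (Ne.symm (hNoLoop e0 he0))
  have hmem0 : v e0 ∈ U := Submodule.subset_span ⟨e0, Finset.mem_coe.mpr he0, rfl⟩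
  set x0 : U := ⟨v e0, hmem0⟩ with hx0def
  have hx0 : x0 ≠ 0 := by
    intro h
    exact hv0 (congrArg (Subtype.val) h)
  have hnx0 : ‖x0‖ ≠ 0 := norm_ne_zero_iff.mpr hx0
  have hsphne : (Metric.sphere (0:U) 1).Nonempty := by
    refine ⟨‖x0‖⁻¹ • x0, ?_⟩
    have hn := norm_smul (‖x0‖⁻¹) x0
    rw [Metric.mem_sphere, dist_zero_right, hn, norm_inv, norm_norm]
    exact inv_mul_cancel₀ hnx0
  -- the max of the dot products with edge vectors, minimized over the sphere
  have hE' : E.Nonempty := ⟨e0, he0⟩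
  set h : U → ℝ := fun u => E.sup' hE' fun e => dotp (u : Fin n → ℝ) (v e) with hhdef
  have hcont : Continuous h :=
    continuous_sup' hE' _ fun e => (continuous_dotp_left (v e)).comp continuous_subtype_val
  haveI : ProperSpace U := FiniteDimensional.proper ℝ U
  obtain ⟨u0, hu0s, hu0min⟩ :=
    (isCompact_sphere (0:U) 1).exists_isMinOn hsphne hcont.continuousOn
  set δ : ℝ := h u0 with hδdef
  have hδpos : 0 < δ := by
    by_contra hle
    push_neg at hle
    have hall : ∀ e ∈ E, dotp (u0 : Fin n → ℝ) (v e) ≤ 0 := fun e he =>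
      le_trans (Finset.le_sup' (fun e => dotp (u0 : Fin n → ℝ) (v e)) he) hle
    have hzero := h2 _ hall
    have h00 : dotp (u0 : Fin n → ℝ) (u0 : Fin n → ℝ) = 0 := key_orth _ hzero _ u0.2
    have hu00 : (u0 : Fin n → ℝ) = 0 := dotp_self_eq_zero h00
    have hu0z : u0 = 0 := Subtype.ext hu00
    have h1 : ‖u0‖ = 1 := by simpa using hu0s
    rw [hu0z] at h1
    simp at h1
  -- coercivity bound
  have hδ : ∀ u : U, ∃ e ∈ E, δ * ‖u‖ ≤ dotp (u : Fin n → ℝ) (v e) := by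
    intro u
    rcases eq_or_ne u 0 with rfl | hu
    · exact ⟨e0, he0, by simp [dotp]⟩
    · have hnu : ‖u‖ ≠ 0 := norm_ne_zero_iff.mpr hu
      have hpos : (0:ℝ) < ‖u‖ := lt_of_le_of_ne (norm_nonneg u) (Ne.symm hnu)
      set s : U := ‖u‖⁻¹ • u with hsdef
      have hss : s ∈ Metric.sphere (0:U) 1 := by
        have hn := norm_smul (‖u‖⁻¹) u
        rw [hsdef, Metric.mem_sphere, dist_zero_right, hn, norm_inv, norm_norm]
        exact inv_mul_cancel₀ hnu
      have hmin : δ ≤ h s := hu0min hss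
      obtain ⟨e, he, hee⟩ := Finset.exists_mem_eq_sup' hE' fun e => dotp (s : Fin n → ℝ) (v e)
      refine ⟨e, he, ?_⟩
      have hcoe : (s : Fin n → ℝ) = ‖u‖⁻¹ • (u : Fin n → ℝ) := rfl
      have hds : dotp (s : Fin n → ℝ) (v e) = ‖u‖⁻¹ * dotp (u : Fin n → ℝ) (v e) := by
        rw [hcoe, dotp_smul_left]
      have hmin' : δ ≤ ‖u‖⁻¹ * dotp (u : Fin n → ℝ) (v e) := by
        rw [← hds, ← hee]; exact hmin
      have := mul_le_mul_of_nonneg_right hmin' (le_of_lt hpos)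
      calc δ * ‖u‖ ≤ (‖u‖⁻¹ * dotp (u : Fin n → ℝ) (v e)) * ‖u‖ := this
      _ = dotp (u : Fin n → ℝ) (v e) := by
        rw [mul_comm, ← mul_assoc, mul_inv_cancel₀ hnu, one_mul]
  -- the strictly convex potential
  set F : U → ℝ := fun u => ∑ e ∈ E, Real.exp (dotp (u : Fin n → ℝ) (v e)) with hFdef
  have hFcont : Continuous F := continuous_finset_sum _ fun e _ =>
    Real.continuous_exp.comp ((continuous_dotp_left (v e)).comp continuous_subtype_val)
  have hFbound : ∀ u : U, Real.exp (δ * ‖u‖) ≤ F u := by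
    intro u
    obtain ⟨e, he, hde⟩ := hδ u
    calc Real.exp (δ * ‖u‖) ≤ Real.exp (dotp (u : Fin n → ℝ) (v e)) := Real.exp_le_exp.mpr hde
    _ ≤ F u := Finset.single_le_sum
        (f := fun e => Real.exp (dotp (u : Fin n → ℝ) (v e)))
        (fun e _ => (Real.exp_pos _).le) he
  have hcoer : Tendsto F (cocompact U) atTop := by
    apply tendsto_atTop_mono hFbound
    exact Real.tendsto_exp_atTop.comp (tendsto_norm_cocompact_atTop.const_mul_atTop hδpos)
  obtain ⟨w, hw⟩ := hFcont.exists_forall_le hcoer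
  set lam : ((Fin n → ℝ) × (Fin n → ℝ)) → ℝ :=
    fun e => Real.exp (dotp (w : Fin n → ℝ) (v e)) with hlamdef
  -- first-order condition
  have hgrad : ∀ d : U, ∑ e ∈ E, lam e * dotp (d : Fin n → ℝ) (v e) = 0 := by
    intro d
    set φ : ℝ → ℝ := fun t =>
      ∑ e ∈ E, Real.exp (dotp (w : Fin n → ℝ) (v e) + t * dotp (d : Fin n → ℝ) (v e)) with hφdef
    have hφ : ∀ t, φ t = F (w + t • d) := by
      intro t
      apply Finset.sum_congr rfl
      intro e _
      congr 1
      have hc : ((w + t • d : U) : Fin n → ℝ) = (w : Fin n → ℝ) + t • (d : Fin n → ℝ) := rfl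
      rw [hc, dotp_add_left, dotp_smul_left]
    have hmin : IsLocalMin φ 0 := by
      apply Filter.Eventually.of_forall
      intro t
      rw [hφ, hφ]
      have : (w + (0:ℝ) • d) = w := by simp
      rw [this]
      exact hw _
    have hder : HasDerivAt φ (∑ e ∈ E, lam e * dotp (d : Fin n → ℝ) (v e)) 0 := by
      apply HasDerivAt.fun_sum
      intro e he
      have h1 : HasDerivAt
          (fun t : ℝ => dotp (w : Fin n → ℝ) (v e) + t * dotp (d : Fin n → ℝ) (v e))
          (dotp (d : Fin n → ℝ) (v e)) 0 :=
        (hasDerivAt_mul_const _).const_add _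
      simpa [hlamdef] using h1.exp
    exact hmin.hasDerivAt_eq_zero hder
  refine ⟨lam, fun e _ => Real.exp_pos _, ?_⟩
  have hGU : (∑ e ∈ E, lam e • v e) ∈ U :=
    Submodule.sum_mem _ fun e he =>
      Submodule.smul_mem _ _ (Submodule.subset_span ⟨e, Finset.mem_coe.mpr he, rfl⟩)
  have hGG : dotp (∑ e ∈ E, lam e • v e) (∑ e ∈ E, lam e • v e) = 0 := by
    rw [dotp_sum_right]
    exact hgrad ⟨∑ e ∈ E, lam e • v e, hGU⟩
  exact dotp_self_eq_zero hGG

end NotConsistentAux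

/-- For a reaction network `G = (V, E)` (no self-loops), the following are
equivalent:
(1) `G` is not consistent;
(2) there exists `w ∈ ℝ^n` with `w · (y' - y) ≤ 0` for all edges, strict for at
    least one edge;
(3) for all positive rate constants `k` there is a linear function
    `V(x) = w · x` whose derivative along the mass-action vector field is
    strictly negative on the open positive orthant;
(4) for all positive rate constants `k` the mass-action system admits no
    positive equilibrium. -/
theorem not_consistent_tfae (n : ℕ)
    (E : Finset ((Fin n → ℝ) × (Fin n → ℝ)))
    (hNoLoop : ∀ e ∈ E, e.1 ≠ e.2) :
    [ (¬ ∃ lam : (Fin n → ℝ) × (Fin n → ℝ) → ℝ,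
          (∀ e ∈ E, 0 < lam e) ∧ ∑ e ∈ E, lam e • (e.2 - e.1) = 0),
      (∃ w : Fin n → ℝ,
          (∀ e ∈ E, ∑ j, w j * (e.2 j - e.1 j) ≤ 0) ∧
          ∃ e ∈ E, ∑ j, w j * (e.2 j - e.1 j) < 0),
      (∀ k : (Fin n → ℝ) × (Fin n → ℝ) → ℝ, (∀ e ∈ E, 0 < k e) →
          ∃ w : Fin n → ℝ, ∀ x : Fin n → ℝ, (∀ i, 0 < x i) →
            ∑ i, w i * massActionField n E k x i < 0),
      (∀ k : (Fin n → ℝ) × (Fin n → ℝ) → ℝ, (∀ e ∈ E, 0 < k e) →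
          ¬ ∃ x : Fin n → ℝ, (∀ i, 0 < x i) ∧ massActionField n E k x = 0)
    ].TFAE := by
  tfae_have 1 → 2 := by
    intro h1
    by_contra h2
    push_neg at h2
    apply h1
    apply NotConsistentAux.stiemke n E hNoLoop
    intro w hw e he
    have h1' : ∀ e ∈ E, ∑ j, w j * (e.2 j - e.1 j) ≤ 0 := by
      intro e he
      have := hw e he
      simpa [NotConsistentAux.dotp] using this
    have := h2 w h1' e he
    have hle := h1' e he
    simp only [NotConsistentAux.dotp, Pi.sub_apply]
    linarith
  tfae_have 2 → 3 := by
    rintro ⟨w, hle, e0, he0, hlt⟩ k hk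
    refine ⟨w, fun x hx => ?_⟩
    have hcpos : ∀ e ∈ E, 0 < k e * ∏ i, x i ^ e.1 i := fun e he =>
      mul_pos (hk e he) (Finset.prod_pos fun i _ => Real.rpow_pos_of_pos (hx i) _)
    have hrw : ∑ i, w i * massActionField n E k x i
        = ∑ e ∈ E, (k e * ∏ i, x i ^ e.1 i) * (∑ j, w j * (e.2 j - e.1 j)) := by
      unfold massActionField
      simp only [Finset.sum_apply, Pi.smul_apply, Pi.sub_apply, smul_eq_mul, Finset.mul_sum]
      rw [Finset.sum_comm]
      exact Finset.sum_congr rfl fun e _ => Finset.sum_congr rfl fun i _ => by ring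
    rw [hrw]
    have hlt' : ∑ e ∈ E, (k e * ∏ i, x i ^ e.1 i) * (∑ j, w j * (e.2 j - e.1 j))
        < ∑ _e ∈ E, (0:ℝ) := by
      apply Finset.sum_lt_sum
      · intro e he
        have h1 := hcpos e he
        have h2 := hle e he
        nlinarith
      · exact ⟨e0, he0, mul_neg_of_pos_of_neg (hcpos e0 he0) hlt⟩
    simpa using hlt'
  tfae_have 3 → 4 := by
    intro h3 k hk
    rintro ⟨x, hx, hxeq⟩
    obtain ⟨w, hw⟩ := h3 k hk
    have := hw x hx
    rw [hxeq] at this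
    simp at this
  tfae_have 4 → 1 := by
    intro h4
    rintro ⟨lam, hpos, hsum⟩
    apply h4 lam hpos
    refine ⟨fun _ => 1, fun _ => one_pos, ?_⟩
    have hmf : massActionField n E lam (fun _ => 1) = ∑ e ∈ E, lam e • (e.2 - e.1) := by
      unfold massActionField
      apply Finset.sum_congr rfl
      intro e _
      congr 1
      simp [Real.one_rpow]
    rw [hmf, hsum]
  tfae_finish
end

section
/- A reaction network G has deficiency zero if and only if (a) the vertices within each linkage class are affinely independent, and (b) the stoichiometric subspaces associated with the different linkage classes form a direct sum (are linearly independent). -/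
open Module Submodule

section aux

variable {K W : Type*} [Field K] [AddCommGroup W] [Module K W] [FiniteDimensional K W]
variable {ι : Type*} [DecidableEq ι]

lemma finrank_finset_sup_le (s : Finset ι) (f : ι → Submodule K W) :
    finrank K ↥(s.sup f) ≤ ∑ i ∈ s, finrank K ↥(f i) := by
  induction s using Finset.induction with
  | empty => simp
  | insert _ _ ha ih =>
    rename_i a t
    rw [Finset.sup_insert, Finset.sum_insert ha]
    exact (Submodule.finrank_add_le_finrank_add_finrank _ _).trans (by omega)

lemma finrank_finset_sup_eq_of_disjoint (s : Finset ι) (f : ι → Submodule K W)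
    (h : ∀ i ∈ s, Disjoint (f i) ((s.erase i).sup f)) :
    finrank K ↥(s.sup f) = ∑ i ∈ s, finrank K ↥(f i) := by
  induction s using Finset.induction with
  | empty => simp
  | insert _ _ ha ih =>
    rename_i a t
    rw [Finset.sup_insert, Finset.sum_insert ha]
    have hd : Disjoint (f a) (t.sup f) := by
      have := h a (Finset.mem_insert_self a t)
      rwa [Finset.erase_insert ha] at this
    have key := Submodule.finrank_sup_add_finrank_inf_eq (f a) (t.sup f)
    rw [hd.eq_bot] at key
    simp only [finrank_bot] at key
    have ht : finrank K ↥(t.sup f) = ∑ i ∈ t, finrank K ↥(f i) := by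
      apply ih
      intro i hi
      refine ((h i (Finset.mem_insert_of_mem hi)).mono_right ?_)
      exact Finset.sup_mono (Finset.erase_subset_erase _ (Finset.subset_insert a t))
    omega

lemma disjoint_of_finrank_finset_sup_eq (s : Finset ι) (f : ι → Submodule K W)
    (h : finrank K ↥(s.sup f) = ∑ i ∈ s, finrank K ↥(f i)) :
    ∀ i ∈ s, Disjoint (f i) ((s.erase i).sup f) := by
  intro i hi
  have hrw : s.sup f = f i ⊔ (s.erase i).sup f := by
    conv_lhs => rw [← Finset.insert_erase hi]
    rw [Finset.sup_insert]
  have hsum : ∑ j ∈ s, finrank K ↥(f j)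
      = finrank K ↥(f i) + ∑ j ∈ s.erase i, finrank K ↥(f j) := by
    exact (Finset.add_sum_erase s (fun j => finrank K ↥(f j)) hi).symm
  have key := Submodule.finrank_sup_add_finrank_inf_eq (f i) ((s.erase i).sup f)
  have hle := finrank_finset_sup_le (K := K) (W := W) (s.erase i) f
  rw [← hrw] at key
  have h0 : finrank K ↥(f i ⊓ (s.erase i).sup f) = 0 := by omega
  rw [Submodule.finrank_eq_zero] at h0
  exact disjoint_iff.2 h0

lemma erase_univ_sup_eq {ι : Type*} [Fintype ι] [DecidableEq ι]
    (f : ι → Submodule K W) (i : ι) :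
    (Finset.univ.erase i).sup f = ⨆ j, ⨆ _ : j ≠ i, f j := by
  rw [Finset.sup_eq_iSup]
  simp [Finset.mem_erase]

lemma iSupIndep_iff_finrank_univ_sup {ι : Type*} [Fintype ι] [DecidableEq ι]
    (f : ι → Submodule K W) :
    iSupIndep f ↔ finrank K ↥(Finset.univ.sup f) = ∑ i, finrank K ↥(f i) := by
  constructor
  · intro h
    refine finrank_finset_sup_eq_of_disjoint _ _ fun i _ => ?_
    rw [erase_univ_sup_eq]
    exact h i
  · intro h i
    have := disjoint_of_finrank_finset_sup_eq _ _ h i (Finset.mem_univ i)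
    rwa [erase_univ_sup_eq] at this

end aux

/-- The stoichiometric subspace generated by a set of edges. -/
noncomputable def stoichSpanOf (n : ℕ)
    (F : Finset ((Fin n → ℝ) × (Fin n → ℝ))) : Submodule ℝ (Fin n → ℝ) :=
  Submodule.span ℝ { v | ∃ e ∈ F, v = e.2 - e.1 }

/-- **Characterization of deficiency zero.** Let `G = (V, E)` be a reaction
network whose vertex set `V` is partitioned into its linkage classes
`C 1, ..., C ℓ` (the connected components of the underlying undirected graph).
Then `G` has deficiency zero, i.e. `|V| = ℓ + dim S_G`, if and only if
(a) the vertices within each linkage class are affinely independent, and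
(b) the stoichiometric subspaces of the different linkage classes are
    linearly independent (their sum is direct). -/
theorem deficiency_zero_iff (n ℓ : ℕ)
    (E : Finset ((Fin n → ℝ) × (Fin n → ℝ)))
    (hNoLoop : ∀ e ∈ E, e.1 ≠ e.2)
    (V : Finset (Fin n → ℝ))
    (hV : V = E.image Prod.fst ∪ E.image Prod.snd)
    (C : Fin ℓ → Finset (Fin n → ℝ))
    -- the `C i` partition `V`:
    (hcover : ∀ v, v ∈ V ↔ ∃ i, v ∈ C i)
    (hne : ∀ i, (C i).Nonempty)
    (hdisj : ∀ i j, i ≠ j → Disjoint (C i) (C j))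
    -- each `C i` is connected in the underlying undirected graph:
    (hconn : ∀ i, ∀ a ∈ C i, ∀ b ∈ C i,
      Relation.ReflTransGen (fun x y => (x, y) ∈ E ∨ (y, x) ∈ E) a b)
    -- each `C i` is closed under edges (so the `C i` are maximal connected):
    (hclosed : ∀ i, ∀ e ∈ E, (e.1 ∈ C i → e.2 ∈ C i) ∧ (e.2 ∈ C i → e.1 ∈ C i)) :
    (V.card = ℓ + Module.finrank ℝ (stoichSpanOf n E))
    ↔
    ((∀ i, AffineIndependent ℝ (fun v : {x // x ∈ C i} => (v : Fin n → ℝ))) ∧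
      iSupIndep (fun i : Fin ℓ =>
        stoichSpanOf n (E.filter (fun e => e.1 ∈ C i ∧ e.2 ∈ C i)))) := by
  classical
  set S : Fin ℓ → Submodule ℝ (Fin n → ℝ) :=
    fun i => stoichSpanOf n (E.filter (fun e => e.1 ∈ C i ∧ e.2 ∈ C i)) with hS
  -- each edge lies in some component
  have hedge : ∀ e ∈ E, ∃ i, e.1 ∈ C i ∧ e.2 ∈ C i := by
    intro e he
    have h1 : e.1 ∈ V := by
      rw [hV]; exact Finset.mem_union_left _ (Finset.mem_image_of_mem _ he)
    obtain ⟨i, hi⟩ := (hcover e.1).1 h1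
    exact ⟨i, hi, (hclosed i e he).1 hi⟩
  -- S_i is the vector span of C i
  have hSvs : ∀ i, S i = vectorSpan ℝ ((C i : Set (Fin n → ℝ))) := by
    intro i
    apply le_antisymm
    · rw [hS]
      apply Submodule.span_le.2
      rintro v ⟨e, he, rfl⟩
      rw [Finset.mem_filter] at he
      exact vsub_mem_vectorSpan ℝ he.2.2 he.2.1
    · rw [vectorSpan_def]
      apply Submodule.span_le.2
      rintro v ⟨b, hb, a, ha, rfl⟩
      have key : ∀ a ∈ C i, ∀ b,
          Relation.ReflTransGen (fun x y => (x, y) ∈ E ∨ (y, x) ∈ E) a b →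
          b ∈ C i ∧ b - a ∈ S i := by
        intro a ha b hab
        induction hab with
        | refl => exact ⟨ha, by simp [Submodule.zero_mem]⟩
        | @tail b c hab hbc ih =>
          obtain ⟨hbC, hbS⟩ := ih
          have step : c ∈ C i ∧ c - b ∈ S i := by
            rcases hbc with h | h
            · have hcC : c ∈ C i := (hclosed i (b, c) h).1 hbC
              exact ⟨hcC,
                Submodule.subset_span ⟨(b, c), Finset.mem_filter.2 ⟨h, hbC, hcC⟩, rfl⟩⟩
            · have hcC : c ∈ C i := (hclosed i (c, b) h).2 hbC
              have : b - c ∈ S i :=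
                Submodule.subset_span ⟨(c, b), Finset.mem_filter.2 ⟨h, hcC, hbC⟩, rfl⟩
              have := Submodule.neg_mem _ this
              rw [neg_sub] at this
              exact ⟨hcC, this⟩
          refine ⟨step.1, ?_⟩
          have := Submodule.add_mem _ step.2 hbS
          rwa [sub_add_sub_cancel] at this
      have := (key a ha b (hconn i a ha b hb)).2
      simpa using this
  -- total span is the sup of the component spans
  have hsup : stoichSpanOf n E = ⨆ i, S i := by
    rw [stoichSpanOf]
    have : { v : Fin n → ℝ | ∃ e ∈ E, v = e.2 - e.1 }
        = ⋃ i, { v | ∃ e ∈ E.filter (fun e => e.1 ∈ C i ∧ e.2 ∈ C i), v = e.2 - e.1 } := by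
      ext v
      simp only [Set.mem_setOf_eq, Set.mem_iUnion, Finset.mem_filter]
      constructor
      · rintro ⟨e, he, rfl⟩
        obtain ⟨i, hi⟩ := hedge e he
        exact ⟨i, e, ⟨he, hi⟩, rfl⟩
      · rintro ⟨i, e, ⟨he, _⟩, rfl⟩
        exact ⟨e, he, rfl⟩
    rw [this, Submodule.span_iUnion]
    rfl
  -- cardinality of V
  have hVcard : V.card = ∑ i, (C i).card := by
    have hVb : V = Finset.univ.biUnion C := by
      ext v
      simp [hcover v]
    rw [hVb]
    exact Finset.card_biUnion fun i _ j _ hij => hdisj i j hij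
  -- dimension bounds per component
  have hcard : ∀ i, Fintype.card {x // x ∈ C i} = ((C i).card - 1) + 1 := by
    intro i
    rw [Fintype.card_coe]
    have := Finset.card_pos.2 (hne i)
    omega
  have hrange : ∀ i, Set.range (fun v : {x // x ∈ C i} => (v : Fin n → ℝ))
      = (C i : Set (Fin n → ℝ)) := fun i => Subtype.range_coe
  have hdle : ∀ i, finrank ℝ ↥(S i) ≤ (C i).card - 1 := by
    intro i
    rw [hSvs i, ← hrange i]
    exact finrank_vectorSpan_range_le ℝ _ (hcard i)
  have haff : ∀ i, AffineIndependent ℝ (fun v : {x // x ∈ C i} => (v : Fin n → ℝ))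
      ↔ finrank ℝ ↥(S i) = (C i).card - 1 := by
    intro i
    rw [affineIndependent_iff_finrank_vectorSpan_eq ℝ _ (hcard i), hrange i, hSvs i]
  -- total dimension
  have hFle := finrank_finset_sup_le (K := ℝ) Finset.univ S
  rw [Finset.sup_univ_eq_iSup, ← hsup] at hFle
  have hindep : iSupIndep S ↔
      finrank ℝ (stoichSpanOf n E) = ∑ i, finrank ℝ ↥(S i) := by
    rw [iSupIndep_iff_finrank_univ_sup, Finset.sup_univ_eq_iSup, ← hsup]
  have hsumle : ∑ i, finrank ℝ ↥(S i) ≤ ∑ i : Fin ℓ, ((C i).card - 1) :=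
    Finset.sum_le_sum fun i _ => hdle i
  have hsumcard : ∑ i : Fin ℓ, (C i).card = ℓ + ∑ i : Fin ℓ, ((C i).card - 1) := by
    have : ∀ i ∈ Finset.univ, (C i).card = ((C i).card - 1) + 1 := by
      intro i _
      have := Finset.card_pos.2 (hne i)
      omega
    rw [Finset.sum_congr rfl this, Finset.sum_add_distrib]
    simp [add_comm]
  rw [hVcard, hsumcard]
  constructor
  · intro h
    have hF : finrank ℝ (stoichSpanOf n E) = ∑ i : Fin ℓ, ((C i).card - 1) := by omega
    have hsum_eq : ∑ i, finrank ℝ ↥(S i) = ∑ i : Fin ℓ, ((C i).card - 1) := by omega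
    have hpt : ∀ i ∈ Finset.univ, finrank ℝ ↥(S i) = (C i).card - 1 :=
      (Finset.sum_eq_sum_iff_of_le fun i _ => hdle i).1 hsum_eq
    refine ⟨fun i => (haff i).2 (hpt i (Finset.mem_univ i)), ?_⟩
    exact hindep.2 (by omega)
  · rintro ⟨ha, hi⟩
    have hpt : ∀ i, finrank ℝ ↥(S i) = (C i).card - 1 := fun i => (haff i).1 (ha i)
    have := hindep.1 hi
    rw [this, Finset.sum_congr rfl fun i _ => hpt i]
end

section
/- For a linear mass-action system dx/dt = Ax arising from a network that is not weakly reversible, with every source a single species and every target ∅ or a single species, every solution with initial condition in the positive orthant satisfies x_i(t) → 0 as t → ∞ for every species X_i not belonging to a terminal strongly connected component of the reaction graph. -/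
/-- The edge relation of a linear (first-order) reaction network with species
`X 1, ..., X n` and the extra vertex `∅` (encoded as `none`): there is an edge
`X i → X j` iff the rate `K i j` is positive, and an edge `X i → ∅` iff the
rate `K0 i` is positive; `∅` has no outgoing edges. -/
def linStep {n : ℕ} (K : Fin n → Fin n → ℝ) (K0 : Fin n → ℝ) :
    Option (Fin n) → Option (Fin n) → Prop
  | some i, some j => 0 < K i j
  | some i, none => 0 < K0 i
  | none, _ => False

/-- Two vertices lie in the same strongly connected component. -/
def linSameSCC {n : ℕ} (K : Fin n → Fin n → ℝ) (K0 : Fin n → ℝ)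
    (a b : Option (Fin n)) : Prop :=
  Relation.ReflTransGen (linStep K K0) a b ∧ Relation.ReflTransGen (linStep K K0) b a

/-- A species `X i` belongs to a terminal strongly connected component: no
edge leaves the strongly connected component of `X i`. -/
def linTerminal {n : ℕ} (K : Fin n → Fin n → ℝ) (K0 : Fin n → ℝ) (i : Fin n) :
    Prop :=
  ∀ a, linSameSCC K K0 (some i) a → ∀ b, linStep K K0 a b →
    linSameSCC K K0 (some i) b

/-- The network is weakly reversible: every edge lies on a directed cycle. -/
def linWeaklyReversible {n : ℕ} (K : Fin n → Fin n → ℝ) (K0 : Fin n → ℝ) : Prop :=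
  ∀ a b, linStep K K0 a b → Relation.ReflTransGen (linStep K K0) b a

/-- The right-hand side of the linear mass-action ODE:
`dx_i/dt = ∑_j K j i x_j - (∑_j K i j + K0 i) x_i`. -/
def linField {n : ℕ} (K : Fin n → Fin n → ℝ) (K0 : Fin n → ℝ)
    (x : Fin n → ℝ) (i : Fin n) : ℝ :=
  (∑ j, K j i * x j) - ((∑ j, K i j) + K0 i) * x i


section StrongExtinctionAux
open Filter Set Topology

lemma deriv_nonpos_of_left_min (f : ℝ → ℝ) (d τ a : ℝ) (hτ : a < τ)
    (hd : HasDerivAt f d τ) (hmin : ∀ t, a < t → t < τ → f τ ≤ f t) : d ≤ 0 := by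
  have hs := hasDerivAt_iff_tendsto_slope.1 hd
  have h2 : Tendsto (slope f τ) (𝓝[<] τ) (𝓝 d) :=
    hs.mono_left (nhdsWithin_mono _ (fun y hy => ne_of_lt hy))
  refine le_of_tendsto h2 ?_
  filter_upwards [Ioo_mem_nhdsLT_of_mem ⟨hτ, le_refl τ⟩] with t ht
  have h3 : f τ ≤ f t := hmin t ht.1 ht.2
  have : slope f τ t = (f t - f τ) / (t - τ) := slope_def_field f τ t
  rw [this]
  exact div_nonpos_of_nonneg_of_nonpos (by linarith) (by linarith [ht.2])

lemma barbalat (f : ℝ → ℝ) (L C : ℝ) (hL : 0 < L)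
    (hf0 : ∀ t, 0 ≤ t → 0 ≤ f t)
    (hlip : ∀ s t : ℝ, 0 ≤ s → 0 ≤ t → |f s - f t| ≤ L * |s - t|)
    (hint : ∀ T, 0 ≤ T → IntervalIntegrable f MeasureTheory.volume 0 T)
    (hC : ∀ T, 0 ≤ T → (∫ t in (0:ℝ)..T, f t) ≤ C) :
    Tendsto f atTop (𝓝 0) := by
  have hint2 : ∀ a b : ℝ, 0 ≤ a → 0 ≤ b → IntervalIntegrable f MeasureTheory.volume a b := by
    intro a b ha hb
    have := hint (max a b) (le_max_of_le_left ha)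
    refine this.mono_set ?_
    rw [uIcc_of_le (le_max_of_le_left ha)]
    exact uIcc_subset_Icc ⟨ha, le_max_left a b⟩ ⟨hb, le_max_right a b⟩
  set G : ℝ → ℝ := fun T => ∫ t in (0:ℝ)..(max 0 T), f t with hG
  have hmono : Monotone G := by
    intro s t hst
    have h0s : (0:ℝ) ≤ max 0 s := le_max_left _ _
    have h0t : (0:ℝ) ≤ max 0 t := le_max_left _ _
    have hst' : max 0 s ≤ max 0 t := max_le_max le_rfl hst
    have hsplit := intervalIntegral.integral_add_adjacent_intervals
      (hint _ h0s) (hint2 _ _ h0s h0t)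
    simp only [hG]
    rw [← hsplit]
    have : 0 ≤ ∫ u in (max 0 s)..(max 0 t), f u :=
      intervalIntegral.integral_nonneg hst' (fun u hu => hf0 u (le_trans h0s hu.1))
    linarith
  have hbdd : BddAbove (Set.range G) := ⟨C, by rintro _ ⟨T, rfl⟩; exact hC _ (le_max_left _ _)⟩
  have hGA : Tendsto G atTop (𝓝 (⨆ T, G T)) := tendsto_atTop_ciSup hmono hbdd
  rw [Metric.tendsto_atTop]
  intro ε hε
  set δ := ε / (2 * L) with hδ
  have hδpos : 0 < δ := div_pos hε (by linarith)
  have hdiff : Tendsto (fun T => G (T + δ) - G T) atTop (𝓝 0) := by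
    have := (hGA.comp (tendsto_atTop_add_const_right atTop δ tendsto_id)).sub hGA
    simpa using this
  have hevent : ∀ᶠ T in atTop, G (T + δ) - G T < δ * ε / 2 :=
    hdiff.eventually_lt_const (by positivity)
  rcases (hevent.and (eventually_ge_atTop (0:ℝ))).exists_forall_of_atTop with ⟨N, hN⟩
  refine ⟨max N 0, fun T hT => ?_⟩
  have hT0 : 0 ≤ T := le_trans (le_max_right N 0) hT
  have hTN : N ≤ T := le_trans (le_max_left N 0) hT
  obtain ⟨hGT, -⟩ := hN T hTN
  rw [Real.dist_eq, sub_zero, abs_of_nonneg (hf0 T hT0)]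
  by_contra hcon
  push_neg at hcon
  -- f ≥ ε/2 on [T, T+δ]
  have hlow : ∀ s ∈ Icc T (T + δ), ε / 2 ≤ f s := by
    intro s hs
    have h1 : |f s - f T| ≤ L * |s - T| := hlip s T (le_trans hT0 hs.1) hT0
    have h2 : |s - T| ≤ δ := by
      rw [abs_of_nonneg (by linarith [hs.1])]; linarith [hs.2]
    have h3 : L * |s - T| ≤ L * δ := mul_le_mul_of_nonneg_left h2 (le_of_lt hL)
    have h4 : L * δ = ε / 2 := by
      rw [hδ, mul_div_assoc', div_eq_div_iff (by positivity) (by norm_num)]; ring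
    have h5 : |f s - f T| ≤ ε / 2 := le_trans h1 (by linarith)
    have := abs_le.1 h5
    linarith [this.1]
  have hint3 : IntervalIntegrable f MeasureTheory.volume T (T + δ) :=
    hint2 T (T + δ) hT0 (by linarith)
  have hlowint : δ * ε / 2 ≤ ∫ s in T..(T + δ), f s := by
    have := intervalIntegral.integral_mono_on (by linarith : T ≤ T + δ)
      intervalIntegrable_const hint3 hlow
    rw [intervalIntegral.integral_const] at this
    have : (T + δ - T) • (ε / 2) ≤ ∫ s in T..(T+δ), f s := this
    simp only [add_sub_cancel_left, smul_eq_mul] at this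
    linarith
  have hGdiff : G (T + δ) - G T = ∫ s in T..(T + δ), f s := by
    have h0T : max 0 T = T := max_eq_right hT0
    have h0T' : max 0 (T + δ) = T + δ := max_eq_right (by linarith)
    simp only [hG, h0T, h0T']
    rw [← intervalIntegral.integral_add_adjacent_intervals (hint T hT0) hint3]
    ring
  linarith [hGdiff ▸ hGT]

lemma nonneg_sol {n : ℕ} (K : Fin n → Fin n → ℝ) (K0 : Fin n → ℝ)
    (hK : ∀ i j, 0 ≤ K i j) (hK0 : ∀ i, 0 ≤ K0 i)
    (x : ℝ → Fin n → ℝ)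
    (hode : ∀ t ∈ Set.Ici (0:ℝ), ∀ i,
      HasDerivAt (fun s => x s i) (linField K K0 (x t) i) t)
    (hx0 : ∀ i, 0 < x 0 i) :
    ∀ t, 0 ≤ t → ∀ k, 0 ≤ x t k := by
  intro t ht k
  rcases eq_or_lt_of_le ht with h0 | htpos
  · exact le_of_lt (h0 ▸ hx0 k)
  by_contra hneg
  push_neg at hneg
  set R : ℝ := 1 + ∑ j, ∑ m, K j m with hR
  have hRpos : 0 < R := by
    have : (0:ℝ) ≤ ∑ j, ∑ m, K j m :=
      Finset.sum_nonneg fun j _ => Finset.sum_nonneg fun m _ => hK j m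
    linarith
  set ε : ℝ := -x t k / (2 * Real.exp (R * t)) with hε
  have hεpos : 0 < ε := by
    apply div_pos (by linarith) (by positivity)
  set y : ℝ → Fin n → ℝ := fun s j => x s j + ε * Real.exp (R * s) with hy
  have hxc : ∀ (j : Fin n) (s : ℝ), 0 ≤ s → ContinuousAt (fun u => x u j) s :=
    fun j s hs => (hode s hs j).continuousAt
  have hyc : ∀ (j : Fin n) (s : ℝ), 0 ≤ s → ContinuousAt (fun u => y u j) s := by
    intro j s hs
    exact (hxc j s hs).add (Continuous.continuousAt (by continuity))
  have hyder : ∀ (j : Fin n) (s : ℝ), 0 ≤ s →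
      HasDerivAt (fun u => y u j)
        (linField K K0 (x s) j + ε * (R * Real.exp (R * s))) s := by
    intro j s hs
    refine (hode s hs j).add ?_
    have h1 : HasDerivAt (fun u : ℝ => R * u) R s := by
      simpa using (hasDerivAt_id s).const_mul R
    have h2 := (Real.hasDerivAt_exp (R * s)).comp s h1
    have h3 := h2.const_mul ε
    exact h3.congr_deriv (by ring)
  have hclaim : ∀ s ∈ Icc 0 t, ∀ j, 0 < y s j := by
    by_contra hcon
    push_neg at hcon
    set S : Set ℝ := ⋃ j : Fin n, {s | s ∈ Icc 0 t ∧ y s j ≤ 0} with hS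
    have hSclosed : IsClosed S := by
      apply isClosed_iUnion_of_finite
      intro j
      have : {s | s ∈ Icc 0 t ∧ y s j ≤ 0} = Icc 0 t ∩ (fun s => y s j) ⁻¹' Iic 0 := by
        ext s
        simp only [Set.mem_setOf_eq, Set.mem_inter_iff, Set.mem_preimage, Set.mem_Iic]
      rw [this]
      apply ContinuousOn.preimage_isClosed_of_isClosed ?_ isClosed_Icc isClosed_Iic
      exact fun s hs => (hyc j s hs.1).continuousWithinAt
    have hSne : S.Nonempty := by
      obtain ⟨s, hs, j, hj⟩ := hcon
      exact ⟨s, Set.mem_iUnion.2 ⟨j, hs, hj⟩⟩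
    have hSbdd : BddBelow S := by
      refine ⟨0, fun s hs => ?_⟩
      obtain ⟨j, hj⟩ := Set.mem_iUnion.1 hs
      exact hj.1.1
    set τ := sInf S with hτ
    have hτS : τ ∈ S := hSclosed.csInf_mem hSne hSbdd
    obtain ⟨k₀, hk₀⟩ := Set.mem_iUnion.1 hτS
    have hτIcc : τ ∈ Icc 0 t := hk₀.1
    have hyτ : y τ k₀ ≤ 0 := hk₀.2
    have hτpos : 0 < τ := by
      rcases eq_or_lt_of_le hτIcc.1 with h | h
      · exfalso
        rw [← h] at hyτ
        have he : y 0 k₀ = x 0 k₀ + ε := by simp [hy]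
        rw [he] at hyτ
        linarith [hx0 k₀, hεpos]
      · exact h
    have hpos : ∀ s, 0 ≤ s → s < τ → ∀ j, 0 < y s j := by
      intro s hs hsτ j
      by_contra hc
      push_neg at hc
      have : s ∈ S := Set.mem_iUnion.2 ⟨j, ⟨⟨hs, le_trans (le_of_lt hsτ) hτIcc.2⟩, hc⟩⟩
      have := csInf_le hSbdd this
      rw [← hτ] at this; linarith
    have hge : ∀ j, 0 ≤ y τ j := by
      intro j
      have htend : Tendsto (fun s => y s j) (𝓝[<] τ) (𝓝 (y τ j)) :=
        ((hyc j τ (le_of_lt hτpos)).continuousWithinAt).tendsto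
      refine ge_of_tendsto htend ?_
      filter_upwards [Ioo_mem_nhdsLT_of_mem ⟨hτpos, le_refl τ⟩] with s hs
      exact le_of_lt (hpos s (le_of_lt hs.1) hs.2 j)
    have hyτ0 : y τ k₀ = 0 := le_antisymm hyτ (hge k₀)
    -- derivative at τ is ≤ 0 by left minimality
    have hd := hyder k₀ τ (le_of_lt hτpos)
    have hdle : linField K K0 (x τ) k₀ + ε * (R * Real.exp (R * τ)) ≤ 0 := by
      refine deriv_nonpos_of_left_min _ _ τ 0 hτpos hd ?_
      intro s hs0 hsτ
      rw [hyτ0]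
      exact le_of_lt (hpos s (le_of_lt hs0) hsτ k₀)
    -- but the derivative is positive
    have hxτk : x τ k₀ = -(ε * Real.exp (R * τ)) := by
      have : x τ k₀ + ε * Real.exp (R * τ) = 0 := hyτ0
      linarith
    have hxτj : ∀ j, -(ε * Real.exp (R * τ)) ≤ x τ j := by
      intro j
      have := hge j
      simp only [hy] at this
      linarith
    have hE : 0 < Real.exp (R * τ) := Real.exp_pos _
    have hEpos : 0 < ε * Real.exp (R * τ) := by positivity
    have hsum1 : (∑ j, K j k₀) * (-(ε * Real.exp (R * τ))) ≤ ∑ j, K j k₀ * x τ j := by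
      rw [Finset.sum_mul]
      exact Finset.sum_le_sum fun j _ => mul_le_mul_of_nonneg_left (hxτj j) (hK j k₀)
    have hsum2 : (∑ j, K j k₀) ≤ R - 1 := by
      rw [hR]
      have : (∑ j, K j k₀) ≤ ∑ j, ∑ m, K j m :=
        Finset.sum_le_sum fun j _ =>
          Finset.single_le_sum (fun m _ => hK j m) (Finset.mem_univ k₀)
      linarith
    have hq : 0 ≤ (∑ j, K k₀ j) + K0 k₀ :=
      add_nonneg (Finset.sum_nonneg fun j _ => hK k₀ j) (hK0 k₀)
    have hfin : 0 < linField K K0 (x τ) k₀ + ε * (R * Real.exp (R * τ)) := by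
      rw [linField, hxτk]
      nlinarith [hsum1, mul_le_mul_of_nonneg_right hsum2 (le_of_lt hEpos),
        mul_nonneg hq (le_of_lt hEpos), hEpos]
    linarith
  have := hclaim t ⟨ht, le_refl t⟩ k
  have hyt : y t k = x t k + ε * Real.exp (R * t) := rfl
  have hεe : ε * Real.exp (R * t) = -x t k / 2 := by
    rw [hε]; field_simp
  rw [hyt, hεe] at this
  linarith

lemma linField_contAt {n : ℕ} (K : Fin n → Fin n → ℝ) (K0 : Fin n → ℝ)
    (x : ℝ → Fin n → ℝ)
    (hxc : ∀ (j : Fin n) (s : ℝ), 0 ≤ s → ContinuousAt (fun u => x u j) s)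
    (k : Fin n) (s : ℝ) (hs : 0 ≤ s) :
    ContinuousAt (fun u => linField K K0 (x u) k) s := by
  have hFc : Continuous (fun y : Fin n → ℝ => linField K K0 y k) := by
    unfold linField; fun_prop
  have hxv : ContinuousAt (fun u => (fun j => x u j)) s :=
    continuousAt_pi.2 (fun j => hxc j s hs)
  exact (hFc.continuousAt).comp hxv

lemma ftc_coord {n : ℕ} (K : Fin n → Fin n → ℝ) (K0 : Fin n → ℝ)
    (x : ℝ → Fin n → ℝ)
    (hode : ∀ t ∈ Set.Ici (0:ℝ), ∀ i,
      HasDerivAt (fun s => x s i) (linField K K0 (x t) i) t)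
    (T : ℝ) (hT : 0 ≤ T) (k : Fin n) :
    x T k - x 0 k = ∫ t in (0:ℝ)..T, linField K K0 (x t) k := by
  have hxc : ∀ (j : Fin n) (s : ℝ), 0 ≤ s → ContinuousAt (fun u => x u j) s :=
    fun j s hs => (hode s hs j).continuousAt
  have hicc : Set.uIcc (0:ℝ) T = Set.Icc 0 T := Set.uIcc_of_le hT
  symm
  apply intervalIntegral.integral_eq_sub_of_hasDerivAt
  · intro t htm
    rw [hicc] at htm
    exact hode t htm.1 k
  · apply ContinuousOn.intervalIntegrable
    intro t htm
    rw [hicc] at htm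
    exact (linField_contAt K K0 x hxc k t htm.1).continuousWithinAt

lemma field_sum_eq {n : ℕ} (K : Fin n → Fin n → ℝ) (K0 : Fin n → ℝ)
    (hK : ∀ i j, 0 ≤ K i j) (U : Finset (Fin n))
    (hU : ∀ j k, k ∈ U → 0 < K j k → j ∈ U) (y : Fin n → ℝ) :
    ∑ k ∈ U, linField K K0 y k = -∑ k ∈ U, ((K0 k + ∑ j ∈ Uᶜ, K k j) * y k) := by
  have hz : ∀ k ∈ U, ∀ j ∈ Uᶜ, K j k = 0 := by
    intro k hk j hj
    by_contra hne
    have : 0 < K j k := lt_of_le_of_ne (hK j k) (Ne.symm hne)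
    exact (Finset.mem_compl.1 hj) (hU j k hk this)
  have step : ∀ k ∈ U, linField K K0 y k =
      (∑ j ∈ U, K j k * y j) - (∑ j ∈ U, K k j * y k)
        - ((∑ j ∈ Uᶜ, K k j) + K0 k) * y k := by
    intro k hk
    unfold linField
    rw [← Finset.sum_add_sum_compl U (fun j => K j k * y j),
        ← Finset.sum_add_sum_compl U (fun j => K k j)]
    have h0 : ∑ j ∈ Uᶜ, K j k * y j = 0 :=
      Finset.sum_eq_zero fun j hj => by rw [hz k hk j hj, zero_mul]
    rw [h0, ← Finset.sum_mul]
    ring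
  rw [Finset.sum_congr rfl step]
  rw [Finset.sum_sub_distrib, Finset.sum_sub_distrib, Finset.sum_comm]
  have : ∑ j ∈ U, ∑ k ∈ U, K j k * y j = ∑ k ∈ U, ∑ j ∈ U, K k j * y k := by
    apply Finset.sum_congr rfl; intro k _; rfl
  rw [this]
  rw [sub_self, zero_sub, neg_inj]
  apply Finset.sum_congr rfl
  intro k _
  ring

lemma mass_identity {n : ℕ} (K : Fin n → Fin n → ℝ) (K0 : Fin n → ℝ)
    (hK : ∀ i j, 0 ≤ K i j)
    (x : ℝ → Fin n → ℝ)
    (hode : ∀ t ∈ Set.Ici (0:ℝ), ∀ i,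
      HasDerivAt (fun s => x s i) (linField K K0 (x t) i) t)
    (U : Finset (Fin n)) (hU : ∀ j k, k ∈ U → 0 < K j k → j ∈ U)
    (T : ℝ) (hT : 0 ≤ T) :
    ∑ k ∈ U, x T k = ∑ k ∈ U, x 0 k
      - ∫ t in (0:ℝ)..T, ∑ k ∈ U, ((K0 k + ∑ j ∈ Uᶜ, K k j) * x t k) := by
  have hxc : ∀ (j : Fin n) (s : ℝ), 0 ≤ s → ContinuousAt (fun u => x u j) s :=
    fun j s hs => (hode s hs j).continuousAt
  have hicc : Set.uIcc (0:ℝ) T = Set.Icc 0 T := Set.uIcc_of_le hT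
  have hint : ∀ k : Fin n, IntervalIntegrable (fun t => linField K K0 (x t) k)
      MeasureTheory.volume 0 T := by
    intro k
    apply ContinuousOn.intervalIntegrable
    intro t htm
    rw [hicc] at htm
    exact (linField_contAt K K0 x hxc k t htm.1).continuousWithinAt
  have h1 : ∑ k ∈ U, (x T k - x 0 k)
      = ∫ t in (0:ℝ)..T, ∑ k ∈ U, linField K K0 (x t) k := by
    rw [intervalIntegral.integral_finset_sum (fun k _ => hint k)]
    exact Finset.sum_congr rfl fun k _ => ftc_coord K K0 x hode T hT k
  have h2 : (∫ t in (0:ℝ)..T, ∑ k ∈ U, linField K K0 (x t) k)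
      = -∫ t in (0:ℝ)..T, ∑ k ∈ U, ((K0 k + ∑ j ∈ Uᶜ, K k j) * x t k) := by
    rw [← intervalIntegral.integral_neg]
    apply intervalIntegral.integral_congr
    intro t _
    simp only [field_sum_eq K K0 hK U hU, neg_neg]
  rw [Finset.sum_sub_distrib] at h1
  rw [h2] at h1
  linarith

lemma comb_contAt {n : ℕ} (c : Fin n → ℝ) (U : Finset (Fin n))
    (x : ℝ → Fin n → ℝ)
    (hxc : ∀ (j : Fin n) (s : ℝ), 0 ≤ s → ContinuousAt (fun u => x u j) s)
    (s : ℝ) (hs : 0 ≤ s) :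
    ContinuousAt (fun u => ∑ k ∈ U, c k * x u k) s := by
  have hFc : Continuous (fun y : Fin n → ℝ => ∑ k ∈ U, c k * y k) := by fun_prop
  exact hFc.continuousAt.comp (continuousAt_pi.2 fun j => hxc j s hs)

lemma comb_int {n : ℕ} (c : Fin n → ℝ) (U : Finset (Fin n))
    (x : ℝ → Fin n → ℝ)
    (hxc : ∀ (j : Fin n) (s : ℝ), 0 ≤ s → ContinuousAt (fun u => x u j) s)
    (a b : ℝ) (ha : 0 ≤ a) (hb : 0 ≤ b) :
    IntervalIntegrable (fun t => ∑ k ∈ U, c k * x t k) MeasureTheory.volume a b := by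
  apply ContinuousOn.intervalIntegrable
  intro t htm
  have ht : 0 ≤ t := by
    rcases le_total a b with h | h
    · rw [Set.uIcc_of_le h] at htm; exact le_trans ha htm.1
    · rw [Set.uIcc_of_ge h] at htm; exact le_trans hb htm.1
  exact (comb_contAt c U x hxc t ht).continuousWithinAt

lemma x_int {n : ℕ} (x : ℝ → Fin n → ℝ)
    (hxc : ∀ (j : Fin n) (s : ℝ), 0 ≤ s → ContinuousAt (fun u => x u j) s)
    (k : Fin n) (a b : ℝ) (ha : 0 ≤ a) (hb : 0 ≤ b) :
    IntervalIntegrable (fun t => x t k) MeasureTheory.volume a b := by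
  apply ContinuousOn.intervalIntegrable
  intro t htm
  have ht : 0 ≤ t := by
    rcases le_total a b with h | h
    · rw [Set.uIcc_of_le h] at htm; exact le_trans ha htm.1
    · rw [Set.uIcc_of_ge h] at htm; exact le_trans hb htm.1
  exact (hxc k t ht).continuousWithinAt

end StrongExtinctionAux

/-- **Strong extinction for linear networks.** For a linear mass-action system
arising from a network that is not weakly reversible, in which every source
vertex is a single species and every target is `∅` or a single species, every
solution with initial condition in the open positive orthant satisfies
`x_i(t) → 0` as `t → ∞` for every species `X_i` not belonging to a terminal
strongly connected component of the reaction graph. -/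
theorem strong_extinction_linear {n : ℕ}
    (K : Fin n → Fin n → ℝ) (K0 : Fin n → ℝ)
    (hK : ∀ i j, 0 ≤ K i j) (hK0 : ∀ i, 0 ≤ K0 i) (hKd : ∀ i, K i i = 0)
    (hnwr : ¬ linWeaklyReversible K K0)
    (x : ℝ → Fin n → ℝ)
    (hode : ∀ t ∈ Set.Ici (0 : ℝ), ∀ i,
      HasDerivAt (fun s => x s i) (linField K K0 (x t) i) t)
    (hx0 : ∀ i, 0 < x 0 i) :
    ∀ i, ¬ linTerminal K K0 i →
      Filter.Tendsto (fun t => x t i) Filter.atTop (nhds 0) := by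

  classical
  intro i hterm
  have hnn : ∀ t, 0 ≤ t → ∀ k, 0 ≤ x t k := nonneg_sol K K0 hK hK0 x hode hx0
  have hxc : ∀ (j : Fin n) (s : ℝ), 0 ≤ s → ContinuousAt (fun u => x u j) s :=
    fun j s hs => (hode s hs j).continuousAt
  set M : ℝ := ∑ k, x 0 k with hM
  have hM0 : 0 ≤ M := Finset.sum_nonneg fun k _ => (hx0 k).le
  -- uniform bound on coordinates
  have hbound : ∀ T, 0 ≤ T → ∀ k, x T k ≤ M := by
    intro T hT k
    have hid := mass_identity K K0 hK x hode Finset.univ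
      (fun _ _ _ _ => Finset.mem_univ _) T hT
    have hInn : 0 ≤ ∫ t in (0:ℝ)..T,
        ∑ m ∈ Finset.univ, ((K0 m + ∑ j ∈ Finset.univᶜ, K m j) * x t m) := by
      apply intervalIntegral.integral_nonneg hT
      intro u hu
      exact Finset.sum_nonneg fun m _ =>
        mul_nonneg (add_nonneg (hK0 m) (Finset.sum_nonneg fun j _ => hK m j))
          (hnn u hu.1 m)
    have hle : x T k ≤ ∑ m ∈ Finset.univ, x T m :=
      Finset.single_le_sum (fun m _ => hnn T hT m) (Finset.mem_univ k)
    have h0 : ∑ m ∈ Finset.univ, x 0 m = M := rfl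
    rw [hid] at hle
    rw [h0] at hle
    linarith
  -- the ancestor set of i
  set U : Finset (Fin n) := Finset.univ.filter
    (fun j => Relation.ReflTransGen (linStep K K0) (some j) (some i)) with hUdef
  have memU : ∀ j : Fin n,
      j ∈ U ↔ Relation.ReflTransGen (linStep K K0) (some j) (some i) := by
    intro j
    rw [hUdef, Finset.mem_filter]
    simp
  have hUclosed : ∀ j k, k ∈ U → 0 < K j k → j ∈ U := by
    intro j k hk hjk
    rw [memU] at hk ⊢
    exact Relation.ReflTransGen.head (show linStep K K0 (some j) (some k) from hjk) hk
  -- extract the leaking ancestor a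
  unfold linTerminal at hterm
  push_neg at hterm
  obtain ⟨v, hv, w, hvw, hnw⟩ := hterm
  rcases v with _ | a
  · simp [linStep] at hvw
  have hia : Relation.ReflTransGen (linStep K K0) (some i) (some a) := hv.1
  have hai : Relation.ReflTransGen (linStep K K0) (some a) (some i) := hv.2
  have haU : a ∈ U := (memU a).2 hai
  have hra : 0 < K0 a + ∑ j ∈ Uᶜ, K a j := by
    rcases w with _ | b
    · exact add_pos_of_pos_of_nonneg (show 0 < K0 a from hvw)
        (Finset.sum_nonneg fun j _ => hK a j)
    · have hab : 0 < K a b := hvw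
      have hbU : b ∈ Uᶜ := by
        rw [Finset.mem_compl, memU]
        intro hbi
        exact hnw ⟨hia.tail (show linStep K K0 (some a) (some b) from hab), hbi⟩
      have : K a b ≤ ∑ j ∈ Uᶜ, K a j :=
        Finset.single_le_sum (fun j _ => hK a j) hbU
      exact add_pos_of_nonneg_of_pos (hK0 a) (lt_of_lt_of_le hab this)
  -- integral of the leak is bounded
  have hleakbd : ∀ T, 0 ≤ T →
      (∫ t in (0:ℝ)..T, ∑ k ∈ U, ((K0 k + ∑ j ∈ Uᶜ, K k j) * x t k)) ≤ M := by
    intro T hT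
    have hid := mass_identity K K0 hK x hode U hUclosed T hT
    have h1 : 0 ≤ ∑ k ∈ U, x T k := Finset.sum_nonneg fun k _ => hnn T hT k
    have h2 : ∑ k ∈ U, x 0 k ≤ M :=
      Finset.sum_le_sum_of_subset_of_nonneg (Finset.subset_univ U)
        (fun k _ _ => (hx0 k).le)
    linarith
  -- the leaking ancestor has bounded integral
  have hIa : ∀ T, 0 ≤ T →
      (∫ t in (0:ℝ)..T, x t a) ≤ M / (K0 a + ∑ j ∈ Uᶜ, K a j) := by
    intro T hT
    rw [le_div_iff₀ hra]
    have e1 : (∫ t in (0:ℝ)..T, x t a) * (K0 a + ∑ j ∈ Uᶜ, K a j)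
        = ∫ t in (0:ℝ)..T, (K0 a + ∑ j ∈ Uᶜ, K a j) * x t a := by
      rw [intervalIntegral.integral_const_mul]; ring
    rw [e1]
    have e2 : (∫ t in (0:ℝ)..T, (K0 a + ∑ j ∈ Uᶜ, K a j) * x t a)
        ≤ ∫ t in (0:ℝ)..T, ∑ k ∈ U, ((K0 k + ∑ j ∈ Uᶜ, K k j) * x t k) := by
      apply intervalIntegral.integral_mono_on hT
      · exact (x_int x hxc a 0 T le_rfl hT).const_mul _
      · exact comb_int (fun k => K0 k + ∑ j ∈ Uᶜ, K k j) U x hxc 0 T le_rfl hT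
      · intro u hu
        exact Finset.single_le_sum
          (f := fun k => (K0 k + ∑ j ∈ Uᶜ, K k j) * x u k)
          (fun k _ => mul_nonneg
            (add_nonneg (hK0 k) (Finset.sum_nonneg fun j _ => hK k j))
            (hnn u hu.1 k)) haU
    exact le_trans e2 (hleakbd T hT)
  -- backward propagation of integrability
  have hback : ∀ j k : Fin n, 0 < K j k →
      (∃ C, ∀ T, 0 ≤ T → (∫ t in (0:ℝ)..T, x t k) ≤ C) →
      (∃ C, ∀ T, 0 ≤ T → (∫ t in (0:ℝ)..T, x t j) ≤ C) := by
    rintro j k hjk ⟨C, hC⟩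
    refine ⟨(M + ((∑ m, K k m) + K0 k) * C) / K j k, ?_⟩
    intro T hT
    have hC0 : 0 ≤ C := by
      have := hC 0 le_rfl; simpa using this
    have hq : 0 ≤ (∑ m, K k m) + K0 k :=
      add_nonneg (Finset.sum_nonneg fun m _ => hK k m) (hK0 k)
    rw [le_div_iff₀ hjk]
    have hftc := ftc_coord K K0 x hode T hT k
    have hsplit : (∫ t in (0:ℝ)..T, linField K K0 (x t) k)
        = (∫ t in (0:ℝ)..T, ∑ m ∈ Finset.univ, K m k * x t m)
          - ((∑ m, K k m) + K0 k) * ∫ t in (0:ℝ)..T, x t k := by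
      rw [← intervalIntegral.integral_const_mul, ← intervalIntegral.integral_sub
        (comb_int (fun m => K m k) Finset.univ x hxc 0 T le_rfl hT)
        ((x_int x hxc k 0 T le_rfl hT).const_mul _)]
      rfl
    rw [hsplit] at hftc
    have hin : (∫ t in (0:ℝ)..T, ∑ m ∈ Finset.univ, K m k * x t m)
        ≤ M + ((∑ m, K k m) + K0 k) * C := by
      have hb1 : x T k ≤ M := hbound T hT k
      have hb2 : 0 ≤ x 0 k := (hx0 k).le
      have hb3 : ((∑ m, K k m) + K0 k) * (∫ t in (0:ℝ)..T, x t k)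
          ≤ ((∑ m, K k m) + K0 k) * C := mul_le_mul_of_nonneg_left (hC T hT) hq
      linarith
    have hmono : (∫ t in (0:ℝ)..T, x t j) * K j k
        ≤ ∫ t in (0:ℝ)..T, ∑ m ∈ Finset.univ, K m k * x t m := by
      have e1 : (∫ t in (0:ℝ)..T, x t j) * K j k
          = ∫ t in (0:ℝ)..T, K j k * x t j := by
        rw [intervalIntegral.integral_const_mul]; ring
      rw [e1]
      apply intervalIntegral.integral_mono_on hT
      · exact (x_int x hxc j 0 T le_rfl hT).const_mul _
      · exact comb_int (fun m => K m k) Finset.univ x hxc 0 T le_rfl hT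
      · intro u hu
        exact Finset.single_le_sum (f := fun m => K m k * x u m)
          (fun m _ => mul_nonneg (hK m k) (hnn u hu.1 m)) (Finset.mem_univ j)
    linarith
  -- convert the path to a path on species
  have hconv : ∀ {u v : Option (Fin n)}, Relation.ReflTransGen (linStep K K0) u v →
      ∀ p q : Fin n, u = some p → v = some q →
      Relation.ReflTransGen (fun c d : Fin n => 0 < K c d) p q := by
    intro u v h
    induction h with
    | refl =>
      intro p q hp hq
      rw [hp] at hq
      injection hq with h'
      rw [h']
    | @tail b c _ hbc ih =>
      intro p q hp hq
      rcases b with _ | m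
      · exact absurd hbc (by rw [hq]; simp [linStep])
      · subst hq
        exact (ih p m hp rfl).tail (show 0 < K m q from hbc)
  have hpath : Relation.ReflTransGen (fun c d : Fin n => 0 < K c d) i a :=
    hconv hia i a rfl rfl
  -- propagate integrability back to i
  have hIi : ∃ C, ∀ T, 0 ≤ T → (∫ t in (0:ℝ)..T, x t i) ≤ C := by
    refine Relation.ReflTransGen.head_induction_on hpath
      ⟨M / (K0 a + ∑ j ∈ Uᶜ, K a j), hIa⟩ ?_
    intro p c hpc _ ih
    exact hback p c hpc ih
  obtain ⟨C, hC⟩ := hIi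
  -- Lipschitz bound
  set L : ℝ := (∑ j, K j i) * M + ((∑ j, K i j) + K0 i) * M + 1 with hL
  have hs1 : 0 ≤ ∑ j, K j i := Finset.sum_nonneg fun j _ => hK j i
  have hs2 : 0 ≤ (∑ j, K i j) + K0 i :=
    add_nonneg (Finset.sum_nonneg fun j _ => hK i j) (hK0 i)
  have hLpos : 0 < L := by
    have := mul_nonneg hs1 hM0
    have := mul_nonneg hs2 hM0
    rw [hL]; linarith
  have hdb : ∀ u ∈ Set.Ici (0:ℝ), ‖linField K K0 (x u) i‖ ≤ L := by
    intro u hu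
    have hA1 : 0 ≤ ∑ j, K j i * x u j :=
      Finset.sum_nonneg fun j _ => mul_nonneg (hK j i) (hnn u hu j)
    have hA2 : ∑ j, K j i * x u j ≤ (∑ j, K j i) * M := by
      rw [Finset.sum_mul]
      exact Finset.sum_le_sum fun j _ =>
        mul_le_mul_of_nonneg_left (hbound u hu j) (hK j i)
    have hB1 : 0 ≤ ((∑ j, K i j) + K0 i) * x u i := mul_nonneg hs2 (hnn u hu i)
    have hB2 : ((∑ j, K i j) + K0 i) * x u i ≤ ((∑ j, K i j) + K0 i) * M :=
      mul_le_mul_of_nonneg_left (hbound u hu i) hs2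
    rw [Real.norm_eq_abs, linField]
    apply abs_le.2
    constructor <;> [skip; skip] <;> rw [hL] <;> linarith
  have hlip : ∀ s t : ℝ, 0 ≤ s → 0 ≤ t → |x s i - x t i| ≤ L * |s - t| := by
    intro s t hs ht
    have := Convex.norm_image_sub_le_of_norm_hasDerivWithin_le
      (f := fun u => x u i) (f' := fun u => linField K K0 (x u) i)
      (fun u hu => (hode u hu i).hasDerivWithinAt) hdb (convex_Ici 0) ht hs
    simpa [Real.norm_eq_abs] using this
  exact barbalat (fun t => x t i) L C hLpos (fun t ht => hnn t ht i) hlip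
    (fun T hT => x_int x hxc i 0 T le_rfl hT) hC
end
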